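/- arXiv:0706.0292 — 9 statements merged into one kernel-verified Lean document; each statement's English description precedes it below -/
import Mathlib

section
/- If a set S ⊆ ℤ^k is parametrizable by a single k-tuple of integer-valued polynomials (there exist m and g = (g₁,…,g_k) ∈ (Int(ℤ^m))^k with S = g(ℤ^m)), then S is a finite union of sets, each of which is the image of ℤ^m under a k-tuple of polynomials with integer coefficients; in particular S is a finite union of sets parametrizable by k-tuples of polynomials with integer coefficients. -/
open MvPolynomial

lemma bind_decomp {σ : Type*} (d : ℤ) (r : σ → ℤ) (h : MvPolynomial σ ℤ) :
    ∃ q : MvPolynomial σ ℤ,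
      bind₁ (fun j => C (r j) + C d * X j) h = C (eval r h) + C d * q := by
  induction h using MvPolynomial.induction_on with
  | C a => exact ⟨0, by simp⟩
  | add p p' hp hp' =>
      obtain ⟨qp, hqp⟩ := hp; obtain ⟨qq, hqq⟩ := hp'
      refine ⟨qp + qq, ?_⟩
      rw [map_add, hqp, hqq]
      simp only [map_add]
      ring
  | mul_X p j hp =>
      obtain ⟨qp, hqp⟩ := hp
      refine ⟨qp * C (r j) + (C (eval r p) + C d * qp) * X j, ?_⟩
      rw [map_mul, hqp, bind₁_X_right, map_mul, eval_X, map_mul]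
      ring

lemma exists_int_lift {σ : Type*} (p : MvPolynomial σ ℚ)
    (h : ∀ s, ∃ z : ℤ, p.coeff s = (z : ℚ)) :
    ∃ q : MvPolynomial σ ℤ, map (Int.castRingHom ℚ) q = p := by
  classical
  refine ⟨∑ s ∈ p.support, monomial s (p.coeff s).num, ?_⟩
  ext s
  rw [coeff_map, MvPolynomial.coeff_sum]
  simp only [coeff_monomial, Finset.sum_ite_eq', MvPolynomial.mem_support_iff]
  by_cases hs : p.coeff s = 0
  · simp [hs]
  · obtain ⟨z, hz⟩ := h s
    simp [hs, hz]
    intro h; simp [h]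

lemma cast_eval {m : ℕ} (q : MvPolynomial (Fin m) ℤ) (a : Fin m → ℤ) :
    ((eval a q : ℤ) : ℚ) = eval (fun j => (a j : ℚ)) (map (Int.castRingHom ℚ) q) := by
  rw [eval_map]
  exact eval₂_comp_left (Int.castRingHom ℚ) (RingHom.id ℤ) a q

lemma eval_bind₁' {σ τ R : Type*} [CommSemiring R] (f : σ → MvPolynomial τ R)
    (x : τ → R) (p : MvPolynomial σ R) :
    eval x (bind₁ f p) = eval (fun i => eval x (f i)) p := eval₂Hom_bind₁ _ _ _ _


/-- B ⇒ C: if `S ⊆ ℤ^k` is the image of `ℤ^m` under a `k`-tuple of integer-valued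
polynomials, then `S` is a finite union of sets, each of which is the image of `ℤ^m`
under a `k`-tuple of polynomials with integer coefficients. -/
theorem intValued_param_imp_finite_union_int_poly_param (k m : ℕ) (S : Set (Fin k → ℤ))
    (g : Fin k → MvPolynomial (Fin m) ℚ)
    (hint : ∀ i, ∀ a : Fin m → ℤ,
      ∃ z : ℤ, MvPolynomial.eval (fun j => (a j : ℚ)) (g i) = (z : ℚ))
    (hS : S = {v : Fin k → ℤ | ∃ a : Fin m → ℤ,
      ∀ i, MvPolynomial.eval (fun j => (a j : ℚ)) (g i) = (v i : ℚ)}) :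
    ∃ (N : ℕ) (F : Fin N → Fin k → MvPolynomial (Fin m) ℤ),
      S = ⋃ t : Fin N,
        {v : Fin k → ℤ | ∃ a : Fin m → ℤ, ∀ i, MvPolynomial.eval a (F t i) = v i} := by
  classical
  set D : ℕ := ∏ i, ∏ s ∈ (g i).support, ((g i).coeff s).den with hDdef
  have hDpos : 0 < D :=
    Finset.prod_pos fun i _ => Finset.prod_pos fun s _ => ((g i).coeff s).pos
  have hDne : (D : ℤ) ≠ 0 := by exact_mod_cast hDpos.ne'
  have hint2 : ∀ i s, ∃ z : ℤ, (C (D : ℚ) * g i).coeff s = (z : ℚ) := by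
    intro i s
    rw [coeff_C_mul]
    by_cases hs : s ∈ (g i).support
    · have hdvd : ((g i).coeff s).den ∣ D :=
        (Finset.dvd_prod_of_mem _ hs).trans
          (Finset.dvd_prod_of_mem (fun i => ∏ s ∈ (g i).support, ((g i).coeff s).den)
            (Finset.mem_univ i))
      obtain ⟨c, hc⟩ := hdvd
      set q := (g i).coeff s with hqdef
      refine ⟨(c : ℤ) * q.num, ?_⟩
      have h0 : (q.den : ℚ) ≠ 0 := by exact_mod_cast Rat.den_ne_zero q
      have hq : (q.den : ℚ) * q = (q.num : ℚ) := by
        rw [mul_comm]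
        exact (eq_div_iff h0).mp (Rat.num_div_den q).symm
      have h1 : ((D : ℕ) : ℚ) * q = (c : ℚ) * ((q.den : ℚ) * q) := by
        rw [hc]; push_cast; ring
      rw [h1, hq]; push_cast; ring
    · refine ⟨0, ?_⟩
      rw [MvPolynomial.notMem_support_iff.mp hs]
      simp
  choose h hh using fun i => exists_int_lift (C (D : ℚ) * g i) (hint2 i)
  choose z hz using hint
  have hevalh : ∀ (r : Fin m → ℤ) i, eval r (h i) = (D : ℤ) * z i r := by
    intro r i
    have : ((eval r (h i) : ℤ) : ℚ) = (((D : ℤ) * z i r : ℤ) : ℚ) := by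
      rw [cast_eval, hh i]
      push_cast
      rw [map_mul, eval_C, hz i r]
    exact_mod_cast this
  choose q hq using fun (r : Fin m → Fin D) (i : Fin k) =>
    bind_decomp (D : ℤ) (fun j => ((r j : ℕ) : ℤ)) (h i)
  set F' : (Fin m → Fin D) → Fin k → MvPolynomial (Fin m) ℤ :=
    fun r i => C (z i (fun j => ((r j : ℕ) : ℤ))) + q r i with hF'
  have hmap : ∀ (r : Fin m → Fin D) i,
      map (Int.castRingHom ℚ) (F' r i)
        = bind₁ (fun j => C (((r j : ℕ) : ℚ)) + C (D : ℚ) * X j) (g i) := by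
    intro r i
    have h1 : C (D : ℤ) * F' r i
        = bind₁ (fun j => C (((r j : ℕ) : ℤ)) + C (D : ℤ) * X j) (h i) := by
      rw [hq r i, hF', hevalh]
      simp only [map_mul]
      ring
    have h2 := congrArg (map (Int.castRingHom ℚ)) h1
    rw [map_mul, map_C, map_bind₁, hh i] at h2
    simp only [map_add, map_mul, map_C, map_X, bind₁_C_right] at h2
    simp only [eq_intCast, Int.cast_natCast] at h2
    have hC : (C (D : ℚ) : MvPolynomial (Fin m) ℚ) ≠ 0 := by
      simp only [ne_eq, C_eq_zero]
      exact_mod_cast hDpos.ne'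
    exact mul_left_cancel₀ hC h2
  have heval : ∀ (r : Fin m → Fin D) i (b : Fin m → ℤ),
      ((eval b (F' r i) : ℤ) : ℚ)
        = eval (fun j => (((r j : ℕ) : ℚ)) + (D : ℚ) * (b j : ℚ)) (g i) := by
    intro r i b
    rw [cast_eval, hmap, eval_bind₁']
    simp
  -- the finite index
  set e : (Fin m → Fin D) ≃ Fin (Fintype.card (Fin m → Fin D)) := Fintype.equivFin _ with he
  refine ⟨Fintype.card (Fin m → Fin D), fun t => F' (e.symm t), ?_⟩
  rw [hS]
  ext v
  simp only [Set.mem_iUnion, Set.mem_setOf_eq]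
  constructor
  · rintro ⟨a, ha⟩
    have hbound : ∀ j, (a j % (D : ℤ)).toNat < D := by
      intro j
      have h1 : 0 ≤ a j % (D : ℤ) := Int.emod_nonneg _ hDne
      have h2 : a j % (D : ℤ) < (D : ℤ) := Int.emod_lt_of_pos _ (by exact_mod_cast hDpos)
      omega
    set r : Fin m → Fin D := fun j => ⟨(a j % (D : ℤ)).toNat, hbound j⟩ with hr
    have hrz : ∀ j, ((r j : ℕ) : ℤ) = a j % (D : ℤ) := by
      intro j
      have h1 : 0 ≤ a j % (D : ℤ) := Int.emod_nonneg _ hDne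
      simp [hr]
      omega
    set b : Fin m → ℤ := fun j => a j / (D : ℤ) with hb
    refine ⟨e r, b, ?_⟩
    intro i
    have key : (fun j => (((r j : ℕ) : ℚ)) + (D : ℚ) * (b j : ℚ)) = fun j => (a j : ℚ) := by
      funext j
      have h3 : ((r j : ℕ) : ℤ) + (D : ℤ) * b j = a j := by
        rw [hrz j]
        show a j % (D : ℤ) + (D : ℤ) * (a j / (D : ℤ)) = a j
        exact Int.emod_add_mul_ediv (a j) (D : ℤ)
      have := congrArg (fun x : ℤ => (x : ℚ)) h3
      push_cast at this ⊢
      linarith [this]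
    have h4 := heval r i b
    rw [key, ha i] at h4
    have h5 : ((eval b (F' (e.symm (e r)) i) : ℤ) : ℚ) = ((v i : ℤ) : ℚ) := by
      rw [Equiv.symm_apply_apply]; exact h4
    exact_mod_cast h5
  · rintro ⟨t, a, ha⟩
    set r := e.symm t with hrdef
    refine ⟨fun j => ((r j : ℕ) : ℤ) + (D : ℤ) * a j, ?_⟩
    intro i
    have h4 := heval r i a
    rw [ha i] at h4
    have key : (fun j => ((((r j : ℕ) : ℤ) + (D : ℤ) * a j : ℤ) : ℚ))
        = fun j => (((r j : ℕ) : ℚ)) + (D : ℚ) * (a j : ℚ) := by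
      funext j; push_cast; ring
    rw [key, ← h4]
end

section
/- Let q be a power of a prime and let S ⊆ ℤ^k be a finite union of residue classes of the subgroup qℤ^k in ℤ^k (i.e., S = ⋃_{l=0}^{s} (qℤ^k + a_l) for some a₀,…,a_s ∈ ℤ^k). Then S is parametrizable by a k-tuple of polynomials with integer coefficients: there exist n and f = (f₁,…,f_k) ∈ (ℤ[x₁,…,x_n])^k with S = f(ℤ^n). -/
open MvPolynomial

/-- Dichotomy for the "indicator" power map modulo a prime power. -/
lemma chi_dichotomy (p e : ℕ) (hp : p.Prime) (he : 1 ≤ e) (z : ℤ) :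
    ((p ^ e : ℕ) : ℤ) ∣ z ^ (e * (p ^ e).totient) ∨
    ((p ^ e : ℕ) : ℤ) ∣ z ^ (e * (p ^ e).totient) - 1 := by
  set q : ℕ := p ^ e with hq
  by_cases h : (p : ℤ) ∣ z
  · left
    have hφ : 1 ≤ q.totient := Nat.totient_pos.2 (pow_pos hp.pos e)
    have h1 : ((p : ℤ)) ^ e ∣ z ^ e := pow_dvd_pow_of_dvd h e
    have h2 : z ^ e ∣ z ^ (e * q.totient) :=
      pow_dvd_pow z (Nat.le_mul_of_pos_right e hφ)
    have := dvd_trans h1 h2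
    simpa [hq] using this
  · right
    have hcop : IsCoprime z ((q : ℕ) : ℤ) := by
      have hzp : IsCoprime z (p : ℤ) :=
        (((Nat.prime_iff_prime_int.mp hp).coprime_iff_not_dvd).2 h).symm
      simpa [hq] using hzp.pow_right (n := e)
    -- work in ZMod q
    have hunit : IsUnit ((z : ZMod q)) := by
      have := hcop.map (Int.castRingHom (ZMod q))
      simp only [map_natCast, ZMod.natCast_self] at this
      exact isCoprime_zero_right.mp this
    have h1 : ((z : ZMod q)) ^ q.totient = 1 := by
      have := ZMod.pow_totient hunit.unit
      calc ((z : ZMod q)) ^ q.totient = ((hunit.unit : ZMod q)) ^ q.totient := by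
            rw [IsUnit.unit_spec]
        _ = ((hunit.unit ^ q.totient : (ZMod q)ˣ) : ZMod q) := by push_cast; ring
        _ = 1 := by rw [this]; simp
    have : ((z ^ (e * q.totient) - 1 : ℤ) : ZMod q) = 0 := by
      push_cast
      rw [mul_comm e, pow_mul, h1, one_pow]
      ring
    exact (ZMod.intCast_zmod_eq_zero_iff_dvd _ _).1 this

/-- Key inductive construction: a polynomial map whose image modulo `q` is exactly
the finite set of given residue vectors. -/
lemma key_param (k q N : ℕ)
    (hN : ∀ z : ℤ, (q : ℤ) ∣ z ^ N ∨ (q : ℤ) ∣ z ^ N - 1)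
    (z0 : ℤ) (hz0 : (q : ℤ) ∣ z0 ^ N) :
    ∀ (m : ℕ) (A : Fin (m + 1) → Fin k → ℤ),
      ∃ (n : ℕ) (g : Fin k → MvPolynomial (Fin n) ℤ),
        (∀ x : Fin n → ℤ, ∃ l, ∀ i, (q : ℤ) ∣ MvPolynomial.eval x (g i) - A l i) ∧
        (∀ l, ∃ x : Fin n → ℤ, ∀ i, (q : ℤ) ∣ MvPolynomial.eval x (g i) - A l i) := by
  intro m
  induction m with
  | zero =>
    intro A
    refine ⟨0, fun i => C (A 0 i), ?_, ?_⟩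
    · intro x; exact ⟨0, fun i => by simp⟩
    · intro l
      exact ⟨0, fun i => by simp [Fin.eq_zero l]⟩
  | succ m ih =>
    intro A
    obtain ⟨n, g, hg1, hg2⟩ := ih (fun l => A l.castSucc)
    set χ : MvPolynomial (Fin (n + 1)) ℤ := (X (Fin.last n)) ^ N with hχ
    refine ⟨n + 1, fun i =>
      χ * rename Fin.castSucc (g i) + (1 - χ) * C (A (Fin.last (m + 1)) i), ?_, ?_⟩
    · intro x
      set c : ℤ := (x (Fin.last n)) ^ N with hc
      have heval : ∀ i, MvPolynomial.eval x
          (χ * rename Fin.castSucc (g i) + (1 - χ) * C (A (Fin.last (m + 1)) i))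
          = c * MvPolynomial.eval (x ∘ Fin.castSucc) (g i)
            + (1 - c) * A (Fin.last (m + 1)) i := by
        intro i
        simp [hχ, hc, eval_rename]
      rcases hN (x (Fin.last n)) with hd | hd
      · refine ⟨Fin.last (m + 1), fun i => ?_⟩
        rw [heval i]
        have : c * MvPolynomial.eval (x ∘ Fin.castSucc) (g i)
            + (1 - c) * A (Fin.last (m + 1)) i - A (Fin.last (m + 1)) i
            = c * (MvPolynomial.eval (x ∘ Fin.castSucc) (g i) - A (Fin.last (m + 1)) i) := by
          ring
        rw [this]
        exact Dvd.dvd.mul_right hd _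
      · obtain ⟨l', hl'⟩ := hg1 (x ∘ Fin.castSucc)
        refine ⟨l'.castSucc, fun i => ?_⟩
        rw [heval i]
        have : c * MvPolynomial.eval (x ∘ Fin.castSucc) (g i)
            + (1 - c) * A (Fin.last (m + 1)) i - A l'.castSucc i
            = (c - 1) * (MvPolynomial.eval (x ∘ Fin.castSucc) (g i)
                - A (Fin.last (m + 1)) i)
              + (MvPolynomial.eval (x ∘ Fin.castSucc) (g i) - A l'.castSucc i) := by
          ring
        rw [this]
        exact dvd_add (Dvd.dvd.mul_right hd _) (hl' i)
    · intro l
      induction l using Fin.lastCases with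
      | last =>
        refine ⟨Fin.snoc (fun _ => 0) z0, fun i => ?_⟩
        have hx : (Fin.snoc (fun _ => (0:ℤ)) z0 : Fin (n+1) → ℤ) (Fin.last n) = z0 :=
          Fin.snoc_last _ _
        simp only [map_add, map_mul, map_sub, map_one, eval_C, eval_pow, eval_X, hχ,
          eval_rename, hx]
        have : z0 ^ N * MvPolynomial.eval ((Fin.snoc (fun _ => (0:ℤ)) z0) ∘ Fin.castSucc) (g i)
            + (1 - z0 ^ N) * A (Fin.last (m + 1)) i - A (Fin.last (m + 1)) i
            = z0 ^ N * (MvPolynomial.eval ((Fin.snoc (fun _ => (0:ℤ)) z0) ∘ Fin.castSucc) (g i)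
                - A (Fin.last (m + 1)) i) := by
          ring
        rw [this]
        exact Dvd.dvd.mul_right hz0 _
      | cast l' =>
        obtain ⟨x', hx'⟩ := hg2 l'
        refine ⟨Fin.snoc x' 1, fun i => ?_⟩
        have hcomp : (Fin.snoc x' (1:ℤ) : Fin (n+1) → ℤ) ∘ Fin.castSucc = x' := by
          funext j; simp [Fin.snoc_castSucc]
        have hx : (Fin.snoc x' (1:ℤ) : Fin (n+1) → ℤ) (Fin.last n) = 1 :=
          Fin.snoc_last _ _
        simp only [map_add, map_mul, map_sub, map_one, eval_C, eval_pow, eval_X, hχ,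
          eval_rename, hx, hcomp, one_pow, one_mul, sub_self, zero_mul, add_zero]
        exact hx' i

/-- A finite union of residue classes of `qℤ^k` in `ℤ^k`, where `q` is a prime power,
is parametrizable by a `k`-tuple of polynomials with integer coefficients. -/
theorem union_residue_classes_primePower_param (k : ℕ) (p e q : ℕ) (hp : p.Prime)
    (he : 1 ≤ e) (hq : q = p ^ e) (s : ℕ) (a : Fin (s + 1) → Fin k → ℤ)
    (S : Set (Fin k → ℤ))
    (hS : S = ⋃ l : Fin (s + 1),
      {v : Fin k → ℤ | ∃ b : Fin k → ℤ, v = fun i => (q : ℤ) * b i + a l i}) :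
    ∃ (n : ℕ) (f : Fin k → MvPolynomial (Fin n) ℤ),
      S = {v : Fin k → ℤ | ∃ x : Fin n → ℤ, ∀ i, MvPolynomial.eval x (f i) = v i} := by
  subst hq
  set q : ℕ := p ^ e with hqdef
  have hq0 : (q : ℤ) ≠ 0 := by
    have : 0 < q := pow_pos hp.pos e
    exact_mod_cast this.ne'
  set N : ℕ := e * q.totient with hNdef
  have hN : ∀ z : ℤ, (q : ℤ) ∣ z ^ N ∨ (q : ℤ) ∣ z ^ N - 1 := chi_dichotomy p e hp he
  have hz0 : (q : ℤ) ∣ (p : ℤ) ^ N := by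
    have hφ : 1 ≤ q.totient := Nat.totient_pos.2 (pow_pos hp.pos e)
    have h1 : ((p : ℤ)) ^ e ∣ (p:ℤ) ^ N :=
      pow_dvd_pow (p:ℤ) (Nat.le_mul_of_pos_right e hφ)
    simpa [hqdef] using h1
  obtain ⟨n, g, hg1, hg2⟩ := key_param k q N hN (p : ℤ) hz0 s a
  refine ⟨n + k, fun i =>
    C (q : ℤ) * X (Fin.natAdd n i) + rename (Fin.castAdd k) (g i), ?_⟩
  rw [hS]
  ext v
  simp only [Set.mem_iUnion, Set.mem_setOf_eq]
  constructor
  · rintro ⟨l, b, rfl⟩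
    obtain ⟨x0, hx0⟩ := hg2 l
    set y : Fin k → ℤ := fun i =>
      ((q : ℤ) * b i + a l i - MvPolynomial.eval x0 (g i)) / q with hy
    refine ⟨Fin.addCases x0 y, fun i => ?_⟩
    have hcomp : (Fin.addCases x0 y : Fin (n + k) → ℤ) ∘ Fin.castAdd k = x0 := by
      funext j; simp [Fin.addCases_left]
    have hright : (Fin.addCases x0 y : Fin (n + k) → ℤ) (Fin.natAdd n i) = y i :=
      Fin.addCases_right _
    simp only [map_add, map_mul, eval_C, eval_X, eval_rename, hcomp, hright]
    have hdvd : (q : ℤ) ∣ (q : ℤ) * b i + a l i - MvPolynomial.eval x0 (g i) := by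
      have : (q : ℤ) * b i + a l i - MvPolynomial.eval x0 (g i)
          = (q : ℤ) * b i - (MvPolynomial.eval x0 (g i) - a l i) := by ring
      rw [this]
      exact dvd_sub (Dvd.intro _ rfl) (hx0 i)
    rw [hy]
    have := Int.ediv_mul_cancel hdvd
    linarith [this]
  · rintro ⟨x, hx⟩
    obtain ⟨l, hl⟩ := hg1 (x ∘ Fin.castAdd k)
    refine ⟨l, fun i => (v i - a l i) / q, ?_⟩
    funext i
    have hvi : v i = (q : ℤ) * x (Fin.natAdd n i)
        + MvPolynomial.eval (x ∘ Fin.castAdd k) (g i) := by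
      have := hx i
      simp only [map_add, map_mul, eval_C, eval_X, eval_rename] at this
      linarith [this]
    have hdvd : (q : ℤ) ∣ v i - a l i := by
      rw [hvi]
      have : (q : ℤ) * x (Fin.natAdd n i) + MvPolynomial.eval (x ∘ Fin.castAdd k) (g i)
          - a l i
          = (q : ℤ) * x (Fin.natAdd n i)
            + (MvPolynomial.eval (x ∘ Fin.castAdd k) (g i) - a l i) := by ring
      rw [this]
      exact dvd_add (Dvd.intro _ rfl) (hl i)
    have := Int.ediv_mul_cancel hdvd
    linarith [this]
end

section
/- Let n be a natural number, let c be a positive integer that is a common multiple of 1, 2, …, n, and let j be any integer. Then the binomial polynomial binom(cy + j, n) = (cy+j)(cy+j−1)⋯(cy+j−n+1)/n!, regarded as a polynomial in the variable y, has integer coefficients, i.e., lies in ℤ[y]. -/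
open Polynomial Finset

lemma smeval_descQ (m : ℕ) (y : ℚ) :
    (descPochhammer ℤ m).smeval y = (descPochhammer ℚ m).eval y := by
  rw [← descPochhammer_map (Int.castRingHom ℚ) m, eval_map, ← algebraMap_int_eq, ← aeval_def,
    aeval_eq_smeval]

lemma descQ_int_choose (m : ℕ) (j : ℤ) :
    (descPochhammer ℚ m).eval (j : ℚ) = (m.factorial : ℚ) * ((Ring.choose j m : ℤ) : ℚ) := by
  have h : (descPochhammer ℤ m).eval j = (m.factorial : ℤ) * Ring.choose j m := by
    rw [eval_eq_smeval, Ring.descPochhammer_eq_factorial_smul_choose]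
    simp [nsmul_eq_mul]
  rw [← descPochhammer_eval_cast ℚ, h]
  push_cast
  ring

lemma binom_aux (n : ℕ) (c : ℤ)
    (hmul : ∀ i : ℕ, 1 ≤ i → i ≤ n → (i : ℤ) ∣ c) (j : ℤ) :
    ∃ Q : Polynomial ℤ,
      Q.map (Int.castRingHom ℚ) =
        Polynomial.C ((n.factorial : ℚ)⁻¹) *
          (descPochhammer ℚ n).comp (Polynomial.C (c : ℚ) * Polynomial.X +
            Polynomial.C (j : ℚ)) := by
  induction n using Nat.strong_induction_on generalizing j with
  | _ n IH =>
  -- existence of integer forms for binom(cX, k), k ≤ n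
  have hQk : ∀ k : ℕ, ∃ Qk : Polynomial ℤ, k ≤ n →
      Qk.map (Int.castRingHom ℚ) =
        C ((k.factorial : ℚ)⁻¹) *
          (descPochhammer ℚ k).comp (C (c : ℚ) * X + C (0 : ℚ)) := by
    intro k
    match k with
    | 0 =>
      refine ⟨1, fun _ => ?_⟩
      simp [descPochhammer_zero]
    | (m + 1) =>
      by_cases hk : m + 1 ≤ n
      · obtain ⟨d, hd⟩ := hmul (m + 1) (by omega) hk
        obtain ⟨Q', hQ'⟩ := IH m (by omega)
          (fun i h1 h2 => hmul i h1 (by omega)) (-1)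
        refine ⟨C d * X * Q', fun _ => ?_⟩
        rw [Polynomial.map_mul, Polynomial.map_mul, map_C, map_X, hQ']
        apply Polynomial.funext
        intro q
        have hev : (descPochhammer ℚ (m + 1)).eval ((c : ℚ) * q + 0) =
            ((c : ℚ) * q + 0) * (descPochhammer ℚ m).eval ((c : ℚ) * q + 0 - 1) := by
          rw [descPochhammer_succ_left, eval_mul, eval_X, eval_comp, eval_sub, eval_X, eval_one]
        simp only [eval_mul, eval_C, eval_X, eval_comp, eval_add, hev,
          Int.castRingHom, eq_intCast]
        have hfac : ((m + 1).factorial : ℚ) = (m + 1) * (m.factorial : ℚ) := by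
          rw [Nat.factorial_succ]; push_cast; ring
        have hc' : (c : ℚ) = ((m : ℚ) + 1) * (d : ℚ) := by
          rw [hd]; push_cast; ring
        have hne : ((m : ℚ) + 1) ≠ 0 := by positivity
        have hfe : (m.factorial : ℚ) ≠ 0 := Nat.cast_ne_zero.mpr m.factorial_ne_zero
        have hj : ((-1 : ℤ) : ℚ) = -1 := by norm_num
        rw [hj, hfac, hc']
        have : (c : ℚ) * q + 0 - 1 = (↑m + 1) * ↑d * q + -1 := by rw [hc']; ring
        field_simp
        ring
      · exact ⟨0, fun h => absurd h hk⟩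
  choose g hg using hQk
  refine ⟨∑ k ∈ range (n + 1), C (Ring.choose j (n - k)) * g k, ?_⟩
  rw [Polynomial.map_sum]
  have hmap : ∀ k ∈ range (n + 1),
      (C (Ring.choose j (n - k)) * g k).map (Int.castRingHom ℚ) =
        C ((Ring.choose j (n - k) : ℤ) : ℚ) *
          (C ((k.factorial : ℚ)⁻¹) *
            (descPochhammer ℚ k).comp (C (c : ℚ) * X + C (0 : ℚ))) := by
    intro k hk
    rw [Polynomial.map_mul, map_C, hg k (Nat.lt_succ_iff.mp (mem_range.mp hk))]
    simp [eq_intCast]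
  rw [Finset.sum_congr rfl hmap]
  apply Polynomial.funext
  intro q
  simp only [eval_finset_sum, eval_mul, eval_C, eval_comp, eval_add, eval_X]
  rw [← smeval_descQ, Ring.descPochhammer_smeval_add n (Commute.all _ _),
    Finset.Nat.sum_antidiagonal_eq_sum_range_succ_mk, Finset.mul_sum]
  apply Finset.sum_congr rfl
  intro k hk
  have hkn : k ≤ n := Nat.lt_succ_iff.mp (mem_range.mp hk)
  rw [smeval_descQ, smeval_descQ, descQ_int_choose, add_zero]
  have h := Nat.choose_mul_factorial_mul_factorial hkn
  have h' : ((n.choose k : ℚ)) * (k.factorial : ℚ) * ((n-k).factorial : ℚ) = (n.factorial : ℚ) := by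
    exact_mod_cast congrArg (Nat.cast : ℕ → ℚ) h
  have h1 : (k.factorial : ℚ) ≠ 0 := Nat.cast_ne_zero.mpr k.factorial_ne_zero
  have h2 : ((n-k).factorial : ℚ) ≠ 0 := Nat.cast_ne_zero.mpr (n-k).factorial_ne_zero
  have h3 : (n.factorial : ℚ) ≠ 0 := Nat.cast_ne_zero.mpr n.factorial_ne_zero
  field_simp
  linear_combination (-1 * (descPochhammer ℚ k).eval ((c:ℚ)*q) * ((Ring.choose j (n-k) : ℤ) : ℚ)) * h'

/-- If `c` is a positive integer that is a common multiple of `1, 2, …, n` and `j` is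
any integer, then `binom(cy + j, n) = (cy+j)(cy+j-1)⋯(cy+j-n+1)/n!`, as a polynomial
in `y`, has integer coefficients. -/
theorem binomial_poly_comp_has_integer_coeffs (n : ℕ) (c : ℤ) (hc : 0 < c)
    (hmul : ∀ i : ℕ, 1 ≤ i → i ≤ n → (i : ℤ) ∣ c) (j : ℤ) :
    ∃ Q : Polynomial ℤ,
      Q.map (Int.castRingHom ℚ) =
        Polynomial.C ((n.factorial : ℚ)⁻¹) *
          (descPochhammer ℚ n).comp (Polynomial.C (c : ℚ) * Polynomial.X +
            Polynomial.C (j : ℚ)) := by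
  exact binom_aux n c hmul j
end

section
/- Let f ∈ Int(ℤ) be an integer-valued polynomial in one variable of degree d, and let c = lcm(1, 2, …, d). Then for every integer j the polynomial f_j(y) = f(cy + j) has integer coefficients, i.e., f_j ∈ ℤ[y], and the image of f satisfies f(ℤ) = ⋃_{j=0}^{c−1} f_j(ℤ). -/
open Polynomial


noncomputable def NB (k : ℕ) : Polynomial ℚ := C ((k.factorial : ℚ)⁻¹) * descPochhammer ℚ k

lemma NB_zero : NB 0 = 1 := by simp [NB]

lemma NB_pascal (m : ℕ) : (NB (m+1)).comp (X + C 1) = NB (m+1) + NB m := by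
  have hC : (C (((m+1).factorial : ℚ)⁻¹) * (C 1 + C (m:ℚ)) : ℚ[X])
      = C ((m.factorial : ℚ)⁻¹) := by
    rw [← C_add, ← C_mul]
    congr 1
    have h1 : ((m+1).factorial : ℚ) ≠ 0 := by positivity
    have h2 : ((m).factorial : ℚ) ≠ 0 := by positivity
    field_simp [Nat.factorial_succ]
    rw [Nat.factorial_succ]; push_cast
    try ring
    try tauto
  have key : (descPochhammer ℚ (m+1)).comp (X + C 1) = (X + C 1) * descPochhammer ℚ m := by
    rw [descPochhammer_succ_left, mul_comp, X_comp, comp_assoc]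
    congr 2
    simp [sub_comp]
  unfold NB
  rw [mul_comp, C_comp, key, descPochhammer_succ_right]
  push_cast
  simp only [← C_eq_natCast]
  linear_combination (descPochhammer ℚ m) * hC

lemma NB_lifts (d c : ℕ) (hdvd : ∀ k, 1 ≤ k → k ≤ d → k ∣ c) :
    ∀ k, k ≤ d → ∀ j : ℤ,
      (NB k).comp (C (c:ℚ) * X + C (j:ℚ)) ∈ lifts (Int.castRingHom ℚ) := by
  intro k
  induction k with
  | zero =>
    intro _ j
    rw [NB_zero, one_comp]
    exact one_mem _
  | succ m ih =>
    intro hmd j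
    have hm : m ≤ d := le_of_lt (Nat.lt_of_lt_of_le (Nat.lt_succ_self m) hmd)
    obtain ⟨q, hq⟩ := hdvd (m+1) (Nat.le_add_left 1 m) hmd
    have hneg1 : (-1 : ℚ[X]) ∈ lifts (Int.castRingHom ℚ) := by
      rw [mem_lifts]; exact ⟨-1, by simp⟩
    have key0 : (NB (m+1)).comp (C (c:ℚ) * X) =
        C ((q:ℤ):ℚ) * X * ((NB m).comp (C (c:ℚ) * X + C ((-1:ℤ):ℚ))) := by
      unfold NB
      rw [descPochhammer_succ_left, mul_comp, mul_comp, X_comp, comp_assoc]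
      have hsub : ((X - 1 : ℚ[X])).comp (C (c:ℚ) * X) = C (c:ℚ) * X + C ((-1:ℤ):ℚ) := by
        simp [sub_comp]
        ring
      rw [hsub, C_comp]
      simp only [mul_comp, C_comp]
      have hC : (C (((m+1).factorial : ℚ)⁻¹) * C (c:ℚ) : ℚ[X])
          = C ((q:ℤ):ℚ) * C ((m.factorial : ℚ)⁻¹) := by
        rw [← C_mul, ← C_mul]
        congr 1
        have h1 : ((m+1).factorial : ℚ) ≠ 0 := by positivity
        have h2 : ((m).factorial : ℚ) ≠ 0 := by positivity
        have hcq : (c : ℚ) = ((m:ℚ) + 1) * (q : ℚ) := by exact_mod_cast congrArg (Nat.cast : ℕ → ℚ) hq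
        field_simp [Nat.factorial_succ, hcq]
        rw [Nat.factorial_succ]; push_cast
        rw [hcq]
        ring
      linear_combination ((descPochhammer ℚ m).comp (C (c:ℚ) * X + C ((-1:ℤ):ℚ))) * X * hC
    have base : (NB (m+1)).comp (C (c:ℚ) * X + C ((0:ℤ):ℚ)) ∈ lifts (Int.castRingHom ℚ) := by
      rw [show ((0:ℤ):ℚ) = 0 by norm_num, C_0, add_zero, key0]
      exact mul_mem (mul_mem (C'_mem_lifts ⟨q, rfl⟩) (X_mem_lifts _)) (ih hm (-1))
    have shift : ∀ t : ℤ, (NB (m+1)).comp (C (c:ℚ) * X + (C (t:ℚ) + C 1)) =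
        (NB (m+1)).comp (C (c:ℚ) * X + C (t:ℚ)) + (NB m).comp (C (c:ℚ) * X + C (t:ℚ)) := by
      intro t
      have h := congrArg (fun p => p.comp (C (c:ℚ) * X + C (t:ℚ))) (NB_pascal m)
      simp only [add_comp, comp_assoc, X_comp, C_comp] at h
      rw [← h]
      congr 1
      ring
    induction j using Int.induction_on with
    | zero => exact base
    | succ n ihn =>
      have e : (((n:ℤ)+1 : ℤ):ℚ) = ((n:ℤ):ℚ) + 1 := by push_cast; ring
      rw [e, C_add, shift (n:ℤ)]
      exact add_mem ihn (ih hm n)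
    | pred n ihn =>
      have hs := shift (-(n:ℤ)-1)
      have e1 : C (((-(n:ℤ)-1 : ℤ)):ℚ) + C (1:ℚ) = C (((-(n:ℤ) : ℤ)):ℚ) := by
        rw [← C_add]; congr 1; push_cast; ring
      rw [e1] at hs
      have h2 : (NB (m+1)).comp (C (c:ℚ) * X + C ((-(n:ℤ)-1 : ℤ):ℚ)) =
          (NB (m+1)).comp (C (c:ℚ) * X + C ((-(n:ℤ) : ℤ):ℚ))
          + (-1 : ℚ[X]) * (NB m).comp (C (c:ℚ) * X + C ((-(n:ℤ)-1:ℤ):ℚ)) := by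
        rw [hs]; ring
      rw [h2]
      exact add_mem ihn (mul_mem hneg1 (ih hm (-(n:ℤ)-1)))

lemma hasse_top (f : ℚ[X]) (m : ℕ) (h : f.natDegree ≤ m) :
    Polynomial.hasseDeriv m f = C (f.coeff m) := by
  ext i
  rw [hasseDeriv_coeff]
  cases i with
  | zero => simp
  | succ i =>
    rw [coeff_eq_zero_of_natDegree_lt (lt_of_le_of_lt h (by omega)), coeff_C]
    simp

lemma delta_deg (f : ℚ[X]) (n : ℕ) (h : f.natDegree ≤ n + 1) :
    ((Polynomial.taylor (1:ℚ) f) - f).natDegree ≤ n := by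
  rw [natDegree_le_iff_coeff_eq_zero]
  intro m hm
  rw [coeff_sub, taylor_coeff, hasse_top f m (le_trans h (by omega)), eval_C, sub_self]

lemma const_of_delta_zero (h : ℚ[X]) (hΔ : Polynomial.taylor (1:ℚ) h = h)
    (h0 : h.eval 0 = 0) : h = 0 := by
  have key : ∀ n : ℕ, h.eval (n:ℚ) = 0 := by
    intro n
    induction n with
    | zero => simpa using h0
    | succ n ihn =>
      have h1 := congrArg (Polynomial.eval (n:ℚ)) hΔ
      rw [taylor_eval] at h1
      push_cast
      rw [h1]
      exact ihn
  apply Polynomial.eq_zero_of_infinite_isRoot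
  apply Set.infinite_of_injective_forall_mem (f := fun n : ℕ => (n:ℚ))
  · exact fun a b hab => Nat.cast_injective hab
  · exact fun n => key n

lemma NB_eval_zero (k : ℕ) : (NB (k+1)).eval 0 = 0 := by
  simp [NB, descPochhammer_eval_zero]

lemma decomp : ∀ (n : ℕ) (f : ℚ[X]), (∀ a : ℤ, ∃ z : ℤ, f.eval (a:ℚ) = (z:ℚ)) →
    f.natDegree ≤ n →
    ∃ b : ℕ → ℤ, f = ∑ k ∈ Finset.range (n+1), C ((b k : ℚ)) * NB k := by
  intro n
  induction n with
  | zero =>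
    intro f hf hdeg
    obtain ⟨z, hz⟩ := hf 0
    refine ⟨fun _ => z, ?_⟩
    rw [Finset.sum_range_one, NB_zero, mul_one]
    rw [eq_C_of_natDegree_le_zero hdeg]
    congr 1
    rw [coeff_zero_eq_eval_zero]
    simpa using hz
  | succ n IH =>
    intro f hf hdeg
    set g := Polynomial.taylor (1:ℚ) f - f with hg
    have hgint : ∀ a : ℤ, ∃ z : ℤ, g.eval (a:ℚ) = (z:ℚ) := by
      intro a
      obtain ⟨z1, h1⟩ := hf (a+1)
      obtain ⟨z2, h2⟩ := hf a
      refine ⟨z1 - z2, ?_⟩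
      rw [hg, eval_sub, taylor_eval]
      push_cast at h1 ⊢
      rw [h1, h2]
    obtain ⟨b, hb⟩ := IH g hgint (delta_deg f n hdeg)
    obtain ⟨z0, hz0⟩ := hf 0
    set h := f - (C ((z0:ℤ):ℚ) + ∑ k ∈ Finset.range (n+1), C ((b k : ℤ):ℚ) * NB (k+1)) with hh
    have hpas : ∀ k, Polynomial.taylor (1:ℚ) (C ((b k:ℤ):ℚ) * NB (k+1)) =
        C ((b k:ℤ):ℚ) * NB (k+1) + C ((b k:ℤ):ℚ) * NB k := by
      intro k
      rw [taylor_apply, mul_comp, C_comp, NB_pascal, mul_add]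
    have htf : Polynomial.taylor (1:ℚ) f = f + ∑ k ∈ Finset.range (n+1), C ((b k:ℤ):ℚ) * NB k := by
      rw [← hb, hg]; ring
    have hΔ : Polynomial.taylor (1:ℚ) h = h := by
      rw [hh, map_sub, map_add, map_sum]
      simp only [hpas]
      rw [htf, taylor_C, Finset.sum_add_distrib]
      ring
    have h0 : h.eval 0 = 0 := by
      rw [hh, eval_sub, eval_add, eval_C, eval_finset_sum]
      have : ∀ k ∈ Finset.range (n+1), (C ((b k:ℤ):ℚ) * NB (k+1)).eval 0 = 0 := by
        intro k _
        rw [eval_mul, NB_eval_zero, mul_zero]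
      rw [Finset.sum_congr rfl this, Finset.sum_const_zero]
      have : f.eval 0 = ((z0:ℤ):ℚ) := by simpa using hz0
      rw [this]; ring
    have hf0 : f = C ((z0:ℤ):ℚ) + ∑ k ∈ Finset.range (n+1), C ((b k : ℤ):ℚ) * NB (k+1) := by
      have := const_of_delta_zero h hΔ h0
      rw [hh] at this
      linear_combination this
    refine ⟨fun k => if k = 0 then z0 else b (k-1), ?_⟩
    rw [Finset.sum_range_succ']
    simp only [Nat.succ_ne_zero, if_false, if_true, Nat.add_sub_cancel, NB_zero, mul_one]
    rw [hf0]
    ring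
/-- Lemma 3, one-variable case: if `f ∈ Int(ℤ)` has degree `d` and
`c = lcm(1,…,d)`, then each `f_j(y) = f(cy + j)` has integer coefficients, and the
image of `f` on `ℤ` is the union of the images of `f_0, …, f_{c-1}` on `ℤ`. -/
theorem intValued_poly_image_eq_union_int_poly_images (f : Polynomial ℚ)
    (hf : ∀ a : ℤ, ∃ z : ℤ, f.eval (a : ℚ) = (z : ℚ)) (d c : ℕ)
    (hd : d = f.natDegree) (hc : c = (Finset.Icc 1 d).lcm id) :
    (∀ j : ℤ, ∃ F : Polynomial ℤ,
      F.map (Int.castRingHom ℚ) =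
        f.comp (Polynomial.C (c : ℚ) * Polynomial.X + Polynomial.C (j : ℚ))) ∧
    {z : ℤ | ∃ a : ℤ, f.eval (a : ℚ) = (z : ℚ)} =
      ⋃ j ∈ Finset.range c,
        {z : ℤ | ∃ y : ℤ, f.eval (((c : ℤ) * y + (j : ℤ) : ℤ) : ℚ) = (z : ℚ)} := by
  have hcpos : 0 < c := by
    rcases Nat.eq_zero_or_pos c with h0 | h
    · exfalso
      rw [h0] at hc
      have := (Finset.lcm_eq_zero_iff).mp hc.symm
      obtain ⟨x, hx, hx0⟩ := this
      simp only [Finset.coe_Icc, Finset.mem_Icc, Set.mem_Icc, id] at hx hx0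
      omega
    · exact h
  constructor
  · intro j
    have hdvd : ∀ k, 1 ≤ k → k ≤ d → k ∣ c := by
      intro k h1 h2
      rw [hc]
      exact Finset.dvd_lcm (by rw [Finset.mem_Icc]; exact ⟨h1, h2⟩)
    obtain ⟨b, hb⟩ := decomp d f hf (le_of_eq hd.symm)
    have hmem : f.comp (C (c:ℚ) * X + C (j:ℚ)) ∈ lifts (Int.castRingHom ℚ) := by
      rw [hb, ← coe_compRingHom_apply, map_sum]
      apply sum_mem
      intro k hk
      rw [Finset.mem_range] at hk
      rw [coe_compRingHom_apply, mul_comp, C_comp]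
      exact mul_mem (C'_mem_lifts ⟨b k, rfl⟩)
        (NB_lifts d c hdvd k (by omega) j)
    rw [mem_lifts] at hmem
    exact hmem
  · ext z
    simp only [Set.mem_setOf_eq, Set.mem_iUnion]
    constructor
    · rintro ⟨a, ha⟩
      have hc0 : (c:ℤ) ≠ 0 := by exact_mod_cast hcpos.ne'
      have h1 : 0 ≤ a % (c:ℤ) := Int.emod_nonneg a hc0
      have h2 : a % (c:ℤ) < (c:ℤ) := Int.emod_lt_of_pos a (by exact_mod_cast hcpos)
      refine ⟨(a % (c:ℤ)).toNat, ?_, a / (c:ℤ), ?_⟩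
      · rw [Finset.mem_range]; omega
      · have : (c:ℤ) * (a / (c:ℤ)) + (((a % (c:ℤ)).toNat : ℤ)) = a := by
          rw [Int.toNat_of_nonneg h1]
          exact Int.mul_ediv_add_emod a c
        rw [this]
        exact ha
    · rintro ⟨j, hj, y, hy⟩
      exact ⟨(c:ℤ) * y + (j:ℤ), hy⟩
end

section
/- Let f ∈ Int(ℤ^n) be an integer-valued polynomial in n variables whose degree in the variable x_i is d_i, and for each i let c_i be a common multiple of 1, 2, …, d_i. Then for each choice of integers j₁,…,j_n the polynomial f_{j₁,…,j_n}(y₁,…,y_n) = f(c₁y₁ + j₁, …, c_ny_n + j_n) has integer coefficients, i.e., lies in ℤ[y₁,…,y_n], and the image of f satisfies f(ℤ^n) = ⋃ f_{j₁,…,j_n}(ℤ^n), the union taken over all (j₁,…,j_n) with 0 ≤ j_i < c_i for each i. -/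
open Polynomial

noncomputable def qb (k : ℕ) : ℚ[X] := C ((k.factorial : ℚ)⁻¹) * descPochhammer ℚ k

theorem nat_funext {p q : ℚ[X]} (h : ∀ m : ℕ, p.eval (m : ℚ) = q.eval (m : ℚ)) : p = q := by
  rw [← sub_eq_zero]
  apply Polynomial.eq_zero_of_infinite_isRoot
  apply Set.infinite_of_injective_forall_mem (f := (Nat.cast : ℕ → ℚ))
  · exact Nat.cast_injective
  · intro m
    simp [Polynomial.IsRoot, h m]

theorem qb_eval_nat (k m : ℕ) : (qb k).eval (m : ℚ) = (m.choose k : ℚ) := by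
  rw [qb, eval_mul, eval_C, descPochhammer_eval_eq_descFactorial,
    Nat.descFactorial_eq_factorial_mul_choose]
  push_cast
  rw [← mul_assoc, inv_mul_cancel₀ (by exact_mod_cast k.factorial_ne_zero), one_mul]

theorem qb_pascal (k : ℕ) : taylor 1 (qb (k+1)) - qb (k+1) = qb k := by
  apply nat_funext
  intro m
  rw [eval_sub, taylor_eval]
  have h1 : (m : ℚ) + 1 = ((m+1 : ℕ) : ℚ) := by push_cast; ring
  rw [h1, qb_eval_nat, qb_eval_nat, qb_eval_nat, Nat.choose_succ_succ]
  push_cast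
  ring

theorem hasse_top_eval (f : ℚ[X]) (d : ℕ) (hd : f.natDegree ≤ d + 1) :
    (hasseDeriv (d+1) f).eval 1 = f.coeff (d+1) := by
  have h0 : hasseDeriv (d+1) f = C (f.coeff (d+1)) := by
    have h1 : (hasseDeriv (d+1) f).natDegree ≤ 0 := by
      refine le_trans (natDegree_hasseDeriv_le f (d+1)) ?_
      omega
    rw [eq_C_of_natDegree_le_zero h1, hasseDeriv_coeff]
    simp
  rw [h0, eval_C]

theorem qb_basis (d : ℕ) : ∀ f : ℚ[X], f.natDegree ≤ d →
    (∀ m : ℕ, ∃ z : ℤ, f.eval (m : ℚ) = (z : ℚ)) →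
    ∃ z : ℕ → ℤ, f = ∑ k ∈ Finset.range (d+1), (z k : ℚ) • qb k := by
  induction d with
  | zero =>
    intro f hdeg hval
    obtain ⟨z0, hz0⟩ := hval 0
    refine ⟨fun _ => z0, ?_⟩
    rw [eq_C_of_natDegree_le_zero hdeg] at hz0 ⊢
    simp only [eval_C, Nat.cast_zero] at hz0
    simp [hz0, qb, Nat.factorial, descPochhammer_zero]
    rw [smul_eq_C_mul]
    simp
  | succ d ih =>
    intro f hdeg hval
    set Δf : ℚ[X] := taylor 1 f - f with hΔ
    have hΔdeg : Δf.natDegree ≤ d := by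
      apply natDegree_le_iff_coeff_eq_zero.2
      intro m hm
      rcases eq_or_lt_of_le (Nat.succ_le_of_lt hm) with h | h
      · rw [hΔ, coeff_sub, taylor_coeff 1 f m, ← h, hasse_top_eval f d hdeg, sub_self]
      · rw [hΔ, coeff_sub, coeff_eq_zero_of_natDegree_lt, coeff_eq_zero_of_natDegree_lt, sub_self]
        · omega
        · rw [natDegree_taylor]; omega
    have hΔval : ∀ m : ℕ, ∃ z : ℤ, Δf.eval (m : ℚ) = (z : ℚ) := by
      intro m
      obtain ⟨z1, hz1⟩ := hval (m+1)
      obtain ⟨z2, hz2⟩ := hval m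
      refine ⟨z1 - z2, ?_⟩
      rw [hΔ, eval_sub, taylor_eval]
      push_cast at hz1 ⊢
      rw [hz1, hz2]
    obtain ⟨w, hw⟩ := ih Δf hΔdeg hΔval
    obtain ⟨z0, hz0⟩ := hval 0
    set F : ℚ[X] := ∑ k ∈ Finset.range (d+1), (w k : ℚ) • qb (k+1) with hF
    have hTF : taylor 1 F - F = Δf := by
      rw [hF, map_sum, ← Finset.sum_sub_distrib, hw]
      apply Finset.sum_congr rfl
      intro k _
      rw [LinearMap.map_smul, ← smul_sub, qb_pascal]
    have hg : taylor 1 (f - F) - (f - F) = 0 := by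
      rw [map_sub]
      have h2 : (taylor 1) f - (taylor 1) F - (f - F) = ((taylor 1) f - f) - ((taylor 1) F - F) := by
        ring
      rw [h2, hTF, hΔ, sub_self]
    have hconst : ∀ m : ℕ, (f - F).eval (m : ℚ) = (f - F).eval 0 := by
      intro m
      induction m with
      | zero => norm_num
      | succ m ihm =>
        have h3 := congrArg (eval (m : ℚ)) hg
        rw [eval_sub, taylor_eval, eval_zero, sub_eq_zero] at h3
        push_cast
        rw [h3, ihm]
    have hC : f - F = C ((f - F).eval 0) := by
      apply nat_funext
      intro m
      rw [hconst m, eval_C]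
    have hF0 : F.eval 0 = 0 := by
      rw [hF, eval_finset_sum]
      apply Finset.sum_eq_zero
      intro k _
      have h4 : (0:ℚ) = ((0:ℕ):ℚ) := by norm_num
      rw [smul_eq_C_mul, eval_mul, eval_C, h4, qb_eval_nat]
      simp
    have hqb0 : qb 0 = 1 := by simp [qb, descPochhammer_zero]
    refine ⟨fun k => if k = 0 then z0 else w (k-1), ?_⟩
    rw [Finset.sum_range_succ']
    simp only [if_pos rfl]
    have hfeq : f = F + C ((z0 : ℚ)) := by
      rw [eval_sub, hF0, sub_zero] at hC
      have : eval 0 f = (z0 : ℚ) := by push_cast at hz0; exact hz0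
      rw [this] at hC
      linear_combination hC
    rw [hfeq, hqb0, smul_eq_C_mul, mul_one]
    congr 1

theorem lifts_comp_X_add_C {p : ℚ[X]} (hp : p ∈ lifts (Int.castRingHom ℚ)) (q : ℤ) :
    p.comp (X + C (q : ℚ)) ∈ lifts (Int.castRingHom ℚ) := by
  obtain ⟨P, hP⟩ := (Polynomial.mem_lifts p).1 hp
  apply (Polynomial.mem_lifts _).2
  refine ⟨P.comp (X + C q), ?_⟩
  rw [Polynomial.map_comp, hP]
  simp

theorem qb_comp_lifts (c : ℕ) (hc : 0 < c) :
    ∀ k : ℕ, (∀ t : ℕ, 1 ≤ t → t ≤ k → (t : ℤ) ∣ (c : ℤ)) → ∀ j : ℤ,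
    (qb k).comp (C (c : ℚ) * X + C (j : ℚ)) ∈ lifts (Int.castRingHom ℚ) := by
  intro k
  induction k using Nat.strong_induction_on with
  | _ k ih =>
  intro hdvd j
  -- reduce to 0 ≤ j < c
  obtain ⟨r, hr0, hrc, q, hq⟩ : ∃ r : ℕ, (0:ℤ) ≤ r ∧ (r:ℤ) < c ∧ ∃ q : ℤ, (j:ℤ) = c * q + r := by
    refine ⟨(j % c).toNat, by positivity, ?_, j / c, ?_⟩
    · rw [Int.toNat_of_nonneg (Int.emod_nonneg j (by exact_mod_cast hc.ne'))]
      exact Int.emod_lt_of_pos j (by exact_mod_cast hc)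
    · rw [Int.toNat_of_nonneg (Int.emod_nonneg j (by exact_mod_cast hc.ne'))]
      exact (Int.mul_ediv_add_emod j c).symm
  have key : ∀ r : ℕ, (qb k).comp (C (c : ℚ) * X + C (r : ℚ)) ∈ lifts (Int.castRingHom ℚ) := by
    intro r
    match k, ih, hdvd with
    | 0, ih, hdvd =>
      have : qb 0 = 1 := by simp [qb, descPochhammer_zero]
      rw [this, one_comp]
      exact one_mem _
    | (k'+1), ih, hdvd =>
      have hzero : (qb 0).comp (C (c : ℚ) * X) ∈ lifts (Int.castRingHom ℚ) := by
        have : qb 0 = 1 := by simp [qb, descPochhammer_zero]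
        rw [this, one_comp]
        exact one_mem _
      have hsmall : ∀ a : ℕ, a ≤ k' → (qb a).comp (C (c : ℚ) * X) ∈ lifts (Int.castRingHom ℚ) := by
        intro a ha
        have := ih a (by omega) (fun t h1 h2 => hdvd t h1 (by omega)) 0
        simpa using this
      have htop : (qb (k'+1)).comp (C (c : ℚ) * X) ∈ lifts (Int.castRingHom ℚ) := by
        obtain ⟨e, he⟩ := hdvd (k'+1) (by omega) (le_refl _)
        have hfac : ((k'+1).factorial : ℚ) = ((k'+1 : ℕ) : ℚ) * (k'.factorial : ℚ) := by
          push_cast [Nat.factorial_succ]; ring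
        have hqbs : qb (k'+1) = C (((k'+1 : ℕ) : ℚ))⁻¹ * (X * (qb k').comp (X - 1)) := by
          rw [qb, qb, descPochhammer_succ_left, mul_comp, C_comp, hfac, mul_inv, C_mul]
          ring
        have hscal : C (((k'+1 : ℕ) : ℚ))⁻¹ * C ((c : ℚ)) = C ((e : ℚ)) := by
          rw [← C_mul]
          congr 1
          have hce : (c : ℚ) = ((k'+1 : ℕ) : ℚ) * (e : ℚ) := by exact_mod_cast he
          rw [hce]
          have : ((k'+1 : ℕ) : ℚ) ≠ 0 := by positivity
          field_simp
        have hm1 : (C ((c:ℚ)) * X + C (((-1 : ℤ) : ℚ))) = C ((c:ℚ)) * X - 1 := by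
          push_cast
          ring_nf
          rw [map_neg, map_one]
          ring
        have hcompeq : (qb (k'+1)).comp (C (c : ℚ) * X) =
            C ((e : ℚ)) * (X * (qb k').comp (C ((c:ℚ)) * X + C (((-1 : ℤ) : ℚ)))) := by
          rw [hqbs, mul_comp, C_comp, mul_comp, X_comp, comp_assoc, sub_comp, X_comp, one_comp,
            hm1, ← hscal]
          ring
        rw [hcompeq]
        refine mul_mem (C'_mem_lifts ⟨e, rfl⟩) (mul_mem (X_mem_lifts _) ?_)
        exact ih k' (by omega) (fun t h1 h2 => hdvd t h1 (by omega)) (-1)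
      have hall : ∀ a : ℕ, a ≤ k'+1 → (qb a).comp (C (c : ℚ) * X) ∈ lifts (Int.castRingHom ℚ) := by
        intro a ha
        rcases Nat.lt_or_ge a (k'+1) with h | h
        · exact hsmall a (by omega)
        · have : a = k'+1 := by omega
          rw [this]; exact htop
      have vdm : (qb (k'+1)).comp (C (c : ℚ) * X + C (r : ℚ)) =
          ∑ a ∈ Finset.range (k'+2), ((r.choose (k'+1-a) : ℤ) : ℚ) • (qb a).comp (C (c : ℚ) * X) := by
        apply nat_funext
        intro m
        rw [eval_comp]
        simp only [eval_finset_sum, eval_smul, eval_comp, eval_add, eval_mul, eval_C, eval_X,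
          smul_eq_mul]
        have h1 : (c : ℚ) * (m : ℚ) + (r : ℚ) = ((c*m + r : ℕ) : ℚ) := by push_cast; ring
        have h2 : (c : ℚ) * (m : ℚ) = ((c*m : ℕ) : ℚ) := by push_cast; ring
        rw [h1, qb_eval_nat]
        have h3 := Nat.add_choose_eq (c*m) r (k'+1)
        rw [h3, Finset.Nat.sum_antidiagonal_eq_sum_range_succ_mk]
        push_cast
        apply Finset.sum_congr rfl
        intro a ha
        rw [h2, qb_eval_nat]
        push_cast
        ring
      rw [vdm]
      apply sum_mem
      intro a ha
      rw [smul_eq_C_mul]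
      exact mul_mem (C'_mem_lifts ⟨_, rfl⟩) (hall a (by simp at ha; omega))
  have hcomp : (qb k).comp (C (c : ℚ) * X + C (j : ℚ)) =
      ((qb k).comp (C (c : ℚ) * X + C (r : ℚ))).comp (X + C (q : ℚ)) := by
    rw [comp_assoc]
    congr 1
    simp only [add_comp, mul_comp, C_comp, X_comp, hq]
    push_cast [C_add, C_mul]
    ring
  rw [hcomp]
  exact lifts_comp_X_add_C (key r) q

/-- Single-variable Lemma 3: an integer-valued polynomial composed with `c•X + j`
has integer coefficients. -/
theorem intval_comp_lifts (f : ℚ[X]) (hf : ∀ x : ℤ, ∃ z : ℤ, f.eval (x : ℚ) = (z : ℚ))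
    (c : ℕ) (hc : 0 < c) (hd : ∀ t : ℕ, 1 ≤ t → t ≤ f.natDegree → (t : ℤ) ∣ (c : ℤ)) (j : ℤ) :
    f.comp (C (c : ℚ) * X + C (j : ℚ)) ∈ lifts (Int.castRingHom ℚ) := by
  obtain ⟨z, hz⟩ := qb_basis f.natDegree f (le_refl _) (fun m => by
    obtain ⟨w, hw⟩ := hf m
    exact ⟨w, by rw [← hw]; norm_num⟩)
  rw [hz, Polynomial.sum_comp]
  apply sum_mem
  intro k hk
  rw [smul_comp, smul_eq_C_mul]
  refine mul_mem (C'_mem_lifts ⟨_, rfl⟩) ?_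
  exact qb_comp_lifts c hc k (fun t h1 h2 => hd t h1 (by simp at hk; omega)) j

open MvPolynomial

theorem degreeOf_finset_sum_le {β σ : Type*} (s : Finset β) (g : β → MvPolynomial σ ℚ) (i : σ)
    (d : ℕ) (h : ∀ b ∈ s, (g b).degreeOf i ≤ d) : (∑ b ∈ s, g b).degreeOf i ≤ d := by
  induction s using Finset.cons_induction with
  | empty => simp
  | cons b s hb ihs =>
    rw [Finset.sum_cons]
    refine le_trans (degreeOf_add_le _ _ _) ?_
    simp only [sup_le_iff]
    exact ⟨h b (Finset.mem_cons_self _ _), ihs fun b' hb' => h b' (Finset.mem_cons.2 (Or.inr hb'))⟩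

theorem mv_intval_bind_lifts : ∀ (n : ℕ) (f : MvPolynomial (Fin n) ℚ),
    (∀ a : Fin n → ℤ, ∃ z : ℤ, eval (fun i => (a i : ℚ)) f = (z : ℚ)) →
    ∀ (c : Fin n → ℕ), (∀ i, 0 < c i) →
    (∀ i, ∀ t : ℕ, 1 ≤ t → t ≤ f.degreeOf i → (t : ℤ) ∣ (c i : ℤ)) →
    ∀ (j : Fin n → ℤ), ∃ F : MvPolynomial (Fin n) ℤ,
      MvPolynomial.map (Int.castRingHom ℚ) F =
        bind₁ (fun i => MvPolynomial.C ((c i : ℚ)) * X i + MvPolynomial.C ((j i : ℚ))) f := by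
  intro n
  induction n with
  | zero =>
    intro f hf c hc hd j
    obtain ⟨z, hz⟩ := hf (fun i => i.elim0)
    refine ⟨MvPolynomial.C z, ?_⟩
    have hfC : f = MvPolynomial.C (MvPolynomial.coeff 0 f) := eq_C_of_isEmpty f
    rw [hfC] at hz ⊢
    rw [MvPolynomial.eval_C] at hz
    rw [bind₁_C_right, MvPolynomial.map_C, hz]
    rfl
  | succ n ih =>
    intro f hf c hc hd j
    set e := finSuccEquiv ℚ n with he
    set lin' : Polynomial (MvPolynomial (Fin n) ℚ) :=
      Polynomial.C (MvPolynomial.C ((c 0 : ℚ))) * Polynomial.X +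
        Polynomial.C (MvPolynomial.C ((j 0 : ℚ))) with hlin'
    set E : Polynomial (MvPolynomial (Fin n) ℚ) := (e f).comp lin' with hE
    -- coefficients of E are integer-valued
    have hEcoeff : ∀ (k : ℕ) (a : Fin n → ℤ), ∃ z : ℤ,
        eval (fun i => (a i : ℚ)) (E.coeff k) = (z : ℚ) := by
      intro k a
      have hQ : Polynomial.map (eval (fun i => (a i : ℚ))) E =
          (Polynomial.map (eval fun i => (a i : ℚ)) (e f)).comp
            (Polynomial.C ((c 0 : ℚ)) * Polynomial.X + Polynomial.C ((j 0 : ℚ))) := by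
        rw [hE, Polynomial.map_comp]
        congr 1
        simp [hlin']
      have hmem : Polynomial.map (eval fun i => (a i : ℚ)) E ∈
          Polynomial.lifts (Int.castRingHom ℚ) := by
        rw [hQ]
        apply intval_comp_lifts
        · intro x
          obtain ⟨z, hz⟩ := hf (Fin.cons x a)
          refine ⟨z, ?_⟩
          have harg : (fun i => ((Fin.cons x a : Fin (n+1) → ℤ) i : ℚ)) =
              (Fin.cons (x : ℚ) (fun i => (a i : ℚ)) : Fin (n+1) → ℚ) := by
            funext i
            refine Fin.cases ?_ (fun i' => ?_) i <;> simp
          rw [← hz, he, ← eval_eq_eval_mv_eval', harg]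
        · exact hc 0
        · intro t h1 h2
          apply hd 0 t h1
          calc t ≤ (Polynomial.map (eval fun i => ((a i : ℚ))) (e f)).natDegree := h2
          _ ≤ (e f).natDegree := Polynomial.natDegree_map_le
          _ = f.degreeOf 0 := natDegree_finSuccEquiv f
      obtain ⟨P, hP⟩ := (Polynomial.mem_lifts _).1 hmem
      refine ⟨P.coeff k, ?_⟩
      calc eval (fun i => (a i : ℚ)) (E.coeff k)
          = (Polynomial.map (eval fun i => ((a i : ℚ))) E).coeff k := by
            rw [Polynomial.coeff_map]
        _ = (Polynomial.map (Int.castRingHom ℚ) P).coeff k := by rw [hP]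
        _ = ((P.coeff k : ℤ) : ℚ) := by rw [Polynomial.coeff_map]; rfl
    -- degrees of coefficients of E are bounded
    have hEdeg : ∀ (k : ℕ) (i : Fin n), (E.coeff k).degreeOf i ≤ f.degreeOf i.succ := by
      intro k i
      have hlinmap : lin' = Polynomial.map (MvPolynomial.C : ℚ →+* MvPolynomial (Fin n) ℚ)
          (Polynomial.C ((c 0 : ℚ)) * Polynomial.X + Polynomial.C ((j 0 : ℚ))) := by
        simp [hlin']
      rw [hE, Polynomial.comp_eq_sum_left, Polynomial.sum_def, Polynomial.finset_sum_coeff]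
      apply degreeOf_finset_sum_le
      intro m hm
      rw [Polynomial.coeff_C_mul, hlinmap, ← Polynomial.map_pow, Polynomial.coeff_map]
      refine le_trans (degreeOf_mul_le _ _ _) ?_
      rw [degreeOf_C, add_zero]
      exact degreeOf_coeff_finSuccEquiv f i m
    have hIH : ∀ k : ℕ, ∃ G : MvPolynomial (Fin n) ℤ,
        MvPolynomial.map (Int.castRingHom ℚ) G =
          bind₁ (fun i => MvPolynomial.C ((c i.succ : ℚ)) * X i + MvPolynomial.C ((j i.succ : ℚ)))
            (E.coeff k) := by
      intro k
      exact ih (E.coeff k) (hEcoeff k) (fun i => c i.succ) (fun i => hc i.succ)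
        (fun i t h1 h2 => hd i.succ t h1 (le_trans h2 (hEdeg k i))) (fun i => j i.succ)
    choose G hG using hIH
    set τ : Fin n → MvPolynomial (Fin (n+1)) ℚ :=
      fun i => MvPolynomial.C ((c i.succ : ℚ)) * X i.succ + MvPolynomial.C ((j i.succ : ℚ)) with hτ
    have hhom : (bind₁ (fun i => MvPolynomial.C ((c i : ℚ)) * X i + MvPolynomial.C ((j i : ℚ)))
          : MvPolynomial (Fin (n+1)) ℚ →ₐ[ℚ] MvPolynomial (Fin (n+1)) ℚ)
        = (Polynomial.aevalTower (bind₁ τ) (X 0)).comp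
            (((Polynomial.aeval lin').restrictScalars ℚ).comp e.toAlgHom) := by
      apply MvPolynomial.algHom_ext
      intro i
      refine Fin.cases ?_ (fun i' => ?_) i
      · simp [he, hlin', hτ, finSuccEquiv_X_zero, Polynomial.aevalTower_X, Polynomial.aevalTower_C,
          Polynomial.aeval_X, bind₁_X_right, bind₁_C_right]
      · simp [he, hlin', hτ, finSuccEquiv_X_succ, Polynomial.aevalTower_C, Polynomial.aeval_C,
          bind₁_X_right]
    have hkey : bind₁ (fun i => MvPolynomial.C ((c i : ℚ)) * X i + MvPolynomial.C ((j i : ℚ))) f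
        = Polynomial.aevalTower (bind₁ τ) (X 0) E := by
      have h5 := AlgHom.congr_fun hhom f
      rw [h5]
      simp only [AlgHom.comp_apply, AlgHom.coe_restrictScalars', AlgEquiv.toAlgHom_eq_coe,
        AlgHom.coe_coe]
      rw [hE]
      congr 1
    have hexp : Polynomial.aevalTower (bind₁ τ) (X 0) E =
        ∑ k ∈ Finset.range (E.natDegree + 1), bind₁ τ (E.coeff k) * (X 0) ^ k := by
      conv_lhs => rw [Polynomial.as_sum_range' E (E.natDegree + 1) (lt_add_one _)]
      rw [map_sum]
      apply Finset.sum_congr rfl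
      intro k hk
      rw [← Polynomial.C_mul_X_pow_eq_monomial, map_mul, map_pow, Polynomial.aevalTower_C,
        Polynomial.aevalTower_X]
    have hterm : ∀ k : ℕ, bind₁ τ (E.coeff k) =
        MvPolynomial.map (Int.castRingHom ℚ) (rename Fin.succ (G k)) := by
      intro k
      have hτ2 : (fun i => (rename Fin.succ) (MvPolynomial.C ((c i.succ : ℚ)) * MvPolynomial.X i +
          MvPolynomial.C ((j i.succ : ℚ)))) = τ := by
        funext i
        simp [hτ]
      rw [MvPolynomial.map_rename, hG k, rename_bind₁, hτ2]
    refine ⟨∑ k ∈ Finset.range (E.natDegree + 1), rename Fin.succ (G k) * (X 0) ^ k, ?_⟩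
    rw [hkey, hexp, map_sum]
    apply Finset.sum_congr rfl
    intro k hk
    rw [map_mul, map_pow, hterm k, MvPolynomial.map_X]

/-- Lemma 3, several variables: if `f ∈ Int(ℤ^n)` has degree `d_i` in `x_i` and each
`c_i` is a (positive) common multiple of `1, 2, …, d_i`, then for all integers
`j₁, …, j_n` the polynomial `f(c₁y₁ + j₁, …, c_ny_n + j_n)` has integer coefficients,
and the image of `f` on `ℤ^n` is the union, over all `j` with `0 ≤ j_i < c_i`, of the
images of these polynomials. -/
theorem intValued_mvpoly_image_eq_union_int_poly_images (n : ℕ)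
    (f : MvPolynomial (Fin n) ℚ)
    (hf : ∀ a : Fin n → ℤ, ∃ z : ℤ, MvPolynomial.eval (fun i => (a i : ℚ)) f = (z : ℚ))
    (c : Fin n → ℕ) (hc : ∀ i, 0 < c i)
    (hmul : ∀ i, ∀ t : ℕ, 1 ≤ t → t ≤ f.degreeOf i → t ∣ c i) :
    (∀ j : Fin n → ℤ, ∃ F : MvPolynomial (Fin n) ℤ,
      MvPolynomial.map (Int.castRingHom ℚ) F =
        MvPolynomial.bind₁
          (fun i => MvPolynomial.C ((c i : ℚ)) * MvPolynomial.X i +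
            MvPolynomial.C ((j i : ℚ))) f) ∧
    {z : ℤ | ∃ a : Fin n → ℤ, MvPolynomial.eval (fun i => (a i : ℚ)) f = (z : ℚ)} =
      ⋃ j ∈ {j : Fin n → ℤ | ∀ i, 0 ≤ j i ∧ j i < (c i : ℤ)},
        {z : ℤ | ∃ y : Fin n → ℤ,
          MvPolynomial.eval (fun i => (((c i : ℤ) * y i + j i : ℤ) : ℚ)) f = (z : ℚ)} := by
  constructor
  · intro j
    exact mv_intval_bind_lifts n f hf c hc
      (fun i t h1 h2 => Int.natCast_dvd_natCast.2 (hmul i t h1 h2)) j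
  · ext z
    simp only [Set.mem_setOf_eq, Set.mem_iUnion, exists_prop]
    constructor
    · rintro ⟨a, ha⟩
      refine ⟨fun i => a i % (c i : ℤ), fun i => ?_, fun i => a i / (c i : ℤ), ?_⟩
      · have hci : (0 : ℤ) < (c i : ℤ) := by exact_mod_cast hc i
        exact ⟨Int.emod_nonneg _ hci.ne', Int.emod_lt_of_pos _ hci⟩
      · have harg : (fun i => (((c i : ℤ) * (a i / (c i : ℤ)) + a i % (c i : ℤ) : ℤ) : ℚ)) =
            (fun i => (a i : ℚ)) := by
          funext i
          rw [Int.mul_ediv_add_emod]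
        rw [harg]
        exact ha
    · rintro ⟨jj, hjj, y, hy⟩
      exact ⟨fun i => (c i : ℤ) * y i + jj i, hy⟩
end

section
/- Let k ≥ 1 and let S ⊆ ℤ^k be a set whose complement ℤ^k ∖ S is finite. Then there exist n and a k-tuple f = (f₁,…,f_k) ∈ (ℤ[x₁,…,x_n])^k of polynomials with integer coefficients such that S = f(ℤ^n). -/
open MvPolynomial Finset

noncomputable section CofAux

private def vp (k : ℕ) (i : Fin k) : MvPolynomial (Fin (k+5)) ℤ := X (Fin.castAdd 5 i)
private def wp (k : ℕ) (j : Fin 5) : MvPolynomial (Fin (k+5)) ℤ := X (Fin.natAdd k j)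

private def sqp (k : ℕ) (c : Fin k → ℤ) : MvPolynomial (Fin (k+5)) ℤ :=
  ∑ i : Fin k, (vp k i - C (c i))^2

private def Pp (k : ℕ) (F : Finset (Fin k → ℤ)) : MvPolynomial (Fin (k+5)) ℤ :=
  ∏ c ∈ F, sqp k c

private def Mp (k : ℕ) (F : Finset (Fin k → ℤ)) : MvPolynomial (Fin (k+5)) ℤ :=
  2 + ∑ c ∈ F, sqp k c

private def Dp (k : ℕ) (F : Finset (Fin k → ℤ)) : MvPolynomial (Fin (k+5)) ℤ :=
  (Pp k F - 1 - ((wp k 0)^2 + (wp k 1)^2 + (wp k 2)^2 + (wp k 3)^2)) * Mp k F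

private def fp (k : ℕ) (F : Finset (Fin k → ℤ)) (i : Fin k) : MvPolynomial (Fin (k+5)) ℤ :=
  if (i : ℕ) = 0 then vp k i + Dp k F + (Dp k F)^2 * wp k 4 else vp k i

private lemma eval_Pp (k : ℕ) (F : Finset (Fin k → ℤ)) (a : Fin (k+5) → ℤ) :
    eval a (Pp k F) = ∏ c ∈ F, ∑ i : Fin k, (a (Fin.castAdd 5 i) - c i)^2 := by
  simp [Pp, sqp, vp]

private lemma eval_Mp (k : ℕ) (F : Finset (Fin k → ℤ)) (a : Fin (k+5) → ℤ) :
    eval a (Mp k F) = 2 + ∑ c ∈ F, ∑ i : Fin k, (a (Fin.castAdd 5 i) - c i)^2 := by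
  simp [Mp, sqp, vp]

private lemma eval_Dp (k : ℕ) (F : Finset (Fin k → ℤ)) (a : Fin (k+5) → ℤ) :
    eval a (Dp k F) =
      (eval a (Pp k F) - 1 -
        ((a (Fin.natAdd k 0))^2 + (a (Fin.natAdd k 1))^2 +
         (a (Fin.natAdd k 2))^2 + (a (Fin.natAdd k 3))^2)) * eval a (Mp k F) := by
  simp [Dp, wp]

private lemma eval_fp (k : ℕ) (F : Finset (Fin k → ℤ)) (a : Fin (k+5) → ℤ) (i : Fin k) :
    eval a (fp k F i) =
      if (i : ℕ) = 0 then
        a (Fin.castAdd 5 i) + eval a (Dp k F) + (eval a (Dp k F))^2 * a (Fin.natAdd k 4)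
      else a (Fin.castAdd 5 i) := by
  by_cases hi : (i : ℕ) = 0 <;> simp [fp, hi, vp, wp]

private theorem aux (m : ℕ) (F : Finset (Fin (m+1) → ℤ)) :
    {v : Fin (m+1) → ℤ | v ∉ F} =
      {v : Fin (m+1) → ℤ |
        ∃ a : Fin (m+1+5) → ℤ, ∀ i, eval a (fp (m+1) F i) = v i} := by
  classical
  ext w
  simp only [Set.mem_setOf_eq]
  constructor
  · -- w ∉ F : construct a witness
    intro hw
    have hP : (0:ℤ) < ∏ c ∈ F, ∑ i : Fin (m+1), (w i - c i)^2 := by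
      apply Finset.prod_pos
      intro c hc
      have hne : w ≠ c := by rintro rfl; exact hw hc
      obtain ⟨i, hi⟩ := Function.ne_iff.mp hne
      have h1 : (0:ℤ) < (w i - c i)^2 :=
        pow_pos (abs_pos.mpr (sub_ne_zero.mpr hi)) 2 |>.trans_le (by rw [sq_abs])
      refine lt_of_lt_of_le h1 ?_
      exact Finset.single_le_sum (f := fun j => (w j - c j)^2)
        (fun j _ => sq_nonneg _) (Finset.mem_univ i)
    obtain ⟨x, y, z, u, hxyzu⟩ := Nat.sum_four_squares
      ((∏ c ∈ F, ∑ i : Fin (m+1), (w i - c i)^2) - 1).toNat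
    refine ⟨Fin.append w ![(x:ℤ), y, z, u, 0], ?_⟩
    set g : Fin 5 → ℤ := ![(x:ℤ), y, z, u, 0] with hg
    have hPval : eval (Fin.append w g) (Pp (m+1) F)
        = ∏ c ∈ F, ∑ i : Fin (m+1), (w i - c i)^2 := by
      rw [eval_Pp]
      simp only [Fin.append_left]
    have hsq : ((x:ℤ)^2 + y^2 + z^2 + u^2)
        = (∏ c ∈ F, ∑ i : Fin (m+1), (w i - c i)^2) - 1 := by
      have h2 : (((x^2 + y^2 + z^2 + u^2 : ℕ)):ℤ)
          = (((∏ c ∈ F, ∑ i : Fin (m+1), (w i - c i)^2) - 1).toNat : ℤ) := by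
        exact_mod_cast congrArg (Nat.cast : ℕ → ℤ) hxyzu
      rw [Int.toNat_of_nonneg (by linarith [Int.add_one_le_iff.mpr hP])] at h2
      push_cast at h2
      linarith
    have hD : eval (Fin.append w g) (Dp (m+1) F) = 0 := by
      rw [eval_Dp, hPval]
      simp only [Fin.append_right, hg, Matrix.cons_val_zero, Matrix.cons_val_one,
        Matrix.head_cons, Matrix.cons_val_two, Matrix.tail_cons, Matrix.cons_val_three]
      rw [show (∏ c ∈ F, ∑ i : Fin (m+1), (w i - c i)^2) - 1 -
        ((x:ℤ)^2 + (y:ℤ)^2 + (z:ℤ)^2 + (u:ℤ)^2) = 0 by linarith]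
      ring
    intro i
    rw [eval_fp]
    by_cases hi : (i : ℕ) = 0
    · rw [if_pos hi, hD, Fin.append_left]; ring
    · rw [if_neg hi, Fin.append_left]
  · -- image is contained in complement of F
    rintro ⟨a, ha⟩ hwF
    have ha' := fun i => (eval_fp (m+1) F a i).symm.trans (ha i)
    set v : Fin (m+1) → ℤ := fun i => a (Fin.castAdd 5 i) with hv
    set d : ℤ := eval a (Dp (m+1) F) with hd
    set t : ℤ := a (Fin.natAdd (m+1) 4) with ht
    have z0 : Fin (m+1) := ⟨0, Nat.succ_pos m⟩
    have hcoord : ∀ i : Fin (m+1), (i:ℕ) ≠ 0 → v i = w i := by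
      intro i hi
      have := ha' i
      rwa [if_neg hi] at this
    have h0 : v ⟨0, Nat.succ_pos m⟩ + d + d^2 * t = w ⟨0, Nat.succ_pos m⟩ := by
      have := ha' ⟨0, Nat.succ_pos m⟩
      rwa [if_pos rfl] at this
    by_cases hdz : d = 0
    · have hvw : v = w := by
        funext i
        by_cases hi : (i:ℕ) = 0
        · have hieq : i = ⟨0, Nat.succ_pos m⟩ := Fin.ext hi
          rw [hieq]
          rw [hdz] at h0; linarith [h0]
        · exact hcoord i hi
      have hM : (0:ℤ) < eval a (Mp (m+1) F) := by
        rw [eval_Mp]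
        have hnn : (0:ℤ) ≤ ∑ c ∈ F, ∑ i : Fin (m+1), (a (Fin.castAdd 5 i) - c i)^2 :=
          Finset.sum_nonneg fun c _ => Finset.sum_nonneg fun i _ => sq_nonneg _
        linarith
      have hC : eval a (Pp (m+1) F) - 1 -
          ((a (Fin.natAdd (m+1) 0))^2 + (a (Fin.natAdd (m+1) 1))^2 +
           (a (Fin.natAdd (m+1) 2))^2 + (a (Fin.natAdd (m+1) 3))^2) = 0 := by
        have hdd : d = _ * eval a (Mp (m+1) F) := eval_Dp (m+1) F a
        rw [hdz] at hdd
        rcases mul_eq_zero.mp hdd.symm with h | h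
        · exact h
        · exact absurd h (ne_of_gt hM)
      have hPpos : (1:ℤ) ≤ eval a (Pp (m+1) F) := by
        nlinarith [sq_nonneg (a (Fin.natAdd (m+1) 0)), sq_nonneg (a (Fin.natAdd (m+1) 1)),
          sq_nonneg (a (Fin.natAdd (m+1) 2)), sq_nonneg (a (Fin.natAdd (m+1) 3))]
      have hPzero : eval a (Pp (m+1) F) = 0 := by
        rw [eval_Pp]
        refine Finset.prod_eq_zero hwF ?_
        have hcoords : ∀ i : Fin (m+1), a (Fin.castAdd 5 i) = w i := fun i =>
          congrFun hvw i
        simp [hcoords]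
      linarith
    · -- d ≠ 0 : size contradiction
      have hvw' : ∀ i : Fin (m+1), (i:ℕ) ≠ 0 → v i - w i = 0 := fun i hi => by
        rw [hcoord i hi]; ring
      have hterm : ∑ i : Fin (m+1), (v i - w i)^2
          = (v ⟨0, Nat.succ_pos m⟩ - w ⟨0, Nat.succ_pos m⟩)^2 := by
        rw [Finset.sum_eq_single (⟨0, Nat.succ_pos m⟩ : Fin (m+1))]
        · intro i _ hi
          have hi' : (i:ℕ) ≠ 0 := fun h => hi (Fin.ext h)
          rw [hvw' i hi']; ring
        · intro h; exact absurd (Finset.mem_univ _) h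
      have hMlb : 2 + (v ⟨0, Nat.succ_pos m⟩ - w ⟨0, Nat.succ_pos m⟩)^2
          ≤ eval a (Mp (m+1) F) := by
        rw [eval_Mp]
        have hle : (v ⟨0, Nat.succ_pos m⟩ - w ⟨0, Nat.succ_pos m⟩)^2 ≤
            ∑ c ∈ F, ∑ i : Fin (m+1), (a (Fin.castAdd 5 i) - c i)^2 := by
          rw [← hterm]
          exact Finset.single_le_sum
            (f := fun (c : Fin (m+1) → ℤ) => ∑ i : Fin (m+1), (a (Fin.castAdd 5 i) - c i)^2)
            (fun c _ => Finset.sum_nonneg fun i _ => sq_nonneg _) hwF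
        linarith
      have hCne : eval a (Pp (m+1) F) - 1 -
          ((a (Fin.natAdd (m+1) 0))^2 + (a (Fin.natAdd (m+1) 1))^2 +
           (a (Fin.natAdd (m+1) 2))^2 + (a (Fin.natAdd (m+1) 3))^2) ≠ 0 := by
        intro h
        apply hdz
        rw [hd, eval_Dp, h, zero_mul]
      have hMpos : (0:ℤ) < eval a (Mp (m+1) F) := by
        have := sq_nonneg (v ⟨0, Nat.succ_pos m⟩ - w ⟨0, Nat.succ_pos m⟩)
        linarith
      have habs : eval a (Mp (m+1) F) ≤ |d| := by
        rw [hd, eval_Dp, abs_mul]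
        have h1 : (1:ℤ) ≤ |eval a (Pp (m+1) F) - 1 -
            ((a (Fin.natAdd (m+1) 0))^2 + (a (Fin.natAdd (m+1) 1))^2 +
             (a (Fin.natAdd (m+1) 2))^2 + (a (Fin.natAdd (m+1) 3))^2)| :=
          Int.one_le_abs hCne
        calc eval a (Mp (m+1) F) = 1 * eval a (Mp (m+1) F) := (one_mul _).symm
          _ ≤ _ * eval a (Mp (m+1) F) := mul_le_mul_of_nonneg_right h1 (le_of_lt hMpos)
          _ = _ * |eval a (Mp (m+1) F)| := by rw [abs_of_pos hMpos]
      have hdiv : d ∣ (w ⟨0, Nat.succ_pos m⟩ - v ⟨0, Nat.succ_pos m⟩) :=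
        ⟨1 + d * t, by linarith [h0]⟩
      have hlt : |w ⟨0, Nat.succ_pos m⟩ - v ⟨0, Nat.succ_pos m⟩| < |d| := by
        have h2 : 2 + (v ⟨0, Nat.succ_pos m⟩ - w ⟨0, Nat.succ_pos m⟩)^2 ≤ |d| :=
          le_trans hMlb habs
        nlinarith [abs_nonneg (w ⟨0, Nat.succ_pos m⟩ - v ⟨0, Nat.succ_pos m⟩),
          sq_abs (w ⟨0, Nat.succ_pos m⟩ - v ⟨0, Nat.succ_pos m⟩),
          abs_sub_comm (w ⟨0, Nat.succ_pos m⟩) (v ⟨0, Nat.succ_pos m⟩)]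
      have hzero : w ⟨0, Nat.succ_pos m⟩ - v ⟨0, Nat.succ_pos m⟩ = 0 :=
        Int.eq_zero_of_abs_lt_dvd ((abs_dvd d _).mpr hdiv) hlt
      have hmul : d * (1 + d * t) = 0 := by linarith [h0, hzero]
      have h1 : 1 + d * t = 0 := by
        rcases mul_eq_zero.mp hmul with h | h
        · exact absurd h hdz
        · exact h
      have hd2 : (2:ℤ) ≤ |d| := by
        have := sq_nonneg (v ⟨0, Nat.succ_pos m⟩ - w ⟨0, Nat.succ_pos m⟩)
        linarith [le_trans hMlb habs]
      have hdvd1 : d ∣ 1 := ⟨-t, by linarith⟩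
      have := Int.le_of_dvd one_pos ((abs_dvd _ _).mpr hdvd1)
      linarith

end CofAux

/-- Every co-finite subset `S` of `ℤ^k` (`k ≥ 1`) is the image of some `ℤ^n` under a
`k`-tuple of polynomials with integer coefficients. -/
theorem cofinite_set_int_poly_param (k : ℕ) (hk : 1 ≤ k) (S : Set (Fin k → ℤ))
    (hco : Sᶜ.Finite) :
    ∃ (n : ℕ) (f : Fin k → MvPolynomial (Fin n) ℤ),
      S = {v : Fin k → ℤ | ∃ a : Fin n → ℤ, ∀ i, MvPolynomial.eval a (f i) = v i} := by
  classical
  obtain ⟨m, rfl⟩ : ∃ m, k = m + 1 := ⟨k - 1, by omega⟩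
  refine ⟨m + 1 + 5, fp (m+1) hco.toFinset, ?_⟩
  rw [← aux m hco.toFinset]
  ext v
  simp [Set.Finite.mem_toFinset]
end

section
/- Let n ≥ 0 be an integer and define f ∈ ℤ[x₁,x₂,x₃,x₄,x₅] by f = −x₅²(x₁² + x₂² + x₃² + x₄² + 1) + (1 − x₅²)(x₁² + x₂² + x₃² + x₄² + n + 1). Then the image of f on ℤ⁵ is exactly ℤ ∖ {0, 1, …, n}, i.e., the set of integers z with z < 0 or z > n. -/
open MvPolynomial

/-- The polynomial
`f = −x₅²(x₁² + x₂² + x₃² + x₄² + 1) + (1 − x₅²)(x₁² + x₂² + x₃² + x₄² + n + 1)`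
has image on `ℤ⁵` exactly `ℤ ∖ [0, n]`, i.e. the set of integers `z` with `z < 0` or
`z > n`. -/
theorem image_of_complement_interval_poly (n : ℕ) :
    {z : ℤ | ∃ a : Fin 5 → ℤ,
      MvPolynomial.eval a
        (-(X 4) ^ 2 * ((X 0) ^ 2 + (X 1) ^ 2 + (X 2) ^ 2 + (X 3) ^ 2 + 1) +
          (1 - (X 4) ^ 2) *
            ((X 0) ^ 2 + (X 1) ^ 2 + (X 2) ^ 2 + (X 3) ^ 2 + C (n : ℤ) + 1)) = z} =
    {z : ℤ | z < 0 ∨ (n : ℤ) < z} := by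
  ext z
  simp only [Set.mem_setOf_eq, map_add, map_mul, map_sub, map_neg, map_pow, map_one,
    eval_X, eval_C]
  constructor
  · rintro ⟨a, ha⟩
    rcases eq_or_ne (a 4) 0 with h | h
    · right
      rw [h] at ha
      nlinarith [sq_nonneg (a 0), sq_nonneg (a 1), sq_nonneg (a 2), sq_nonneg (a 3)]
    · left
      have h1 : 1 ≤ (a 4) ^ 2 := by
        have := Int.one_le_abs (by simpa using h)
        nlinarith [sq_abs (a 4)]
      nlinarith [sq_nonneg (a 0), sq_nonneg (a 1), sq_nonneg (a 2), sq_nonneg (a 3),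
        sq_nonneg (a 4), Nat.cast_nonneg (α := ℤ) n]
  · rintro (hz | hz)
    · obtain ⟨A, B, C, D, hs⟩ := Nat.sum_four_squares (-z - 1).toNat
      have hs' : (A : ℤ) ^ 2 + (B : ℤ) ^ 2 + (C : ℤ) ^ 2 + (D : ℤ) ^ 2 = -z - 1 := by
        have h0 : (0 : ℤ) ≤ -z - 1 := by omega
        have := congrArg (Nat.cast : ℕ → ℤ) hs
        push_cast at this
        rw [Int.toNat_of_nonneg h0] at this
        exact this
      refine ⟨![A, B, C, D, 1], ?_⟩
      simp only [Matrix.cons_val_zero, Matrix.cons_val_one, Matrix.head_cons,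
        Matrix.cons_val_two, Matrix.cons_val_three, Matrix.cons_val_four, Matrix.tail_cons]
      norm_num
      linarith
    · obtain ⟨A, B, C, D, hs⟩ := Nat.sum_four_squares (z - n - 1).toNat
      have hs' : (A : ℤ) ^ 2 + (B : ℤ) ^ 2 + (C : ℤ) ^ 2 + (D : ℤ) ^ 2 = z - n - 1 := by
        have h0 : (0 : ℤ) ≤ z - n - 1 := by omega
        have := congrArg (Nat.cast : ℕ → ℤ) hs
        push_cast at this
        rw [Int.toNat_of_nonneg h0] at this
        exact this
      refine ⟨![A, B, C, D, 0], ?_⟩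
      simp only [Matrix.cons_val_zero, Matrix.cons_val_one, Matrix.head_cons,
        Matrix.cons_val_two, Matrix.cons_val_three, Matrix.cons_val_four, Matrix.tail_cons]
      norm_num
      linarith
end

section
/- Let k ≥ 1 and let n₁,…,n_k be non-negative integers. Then the complement in ℤ^k of the cuboid ∏_{i=1}^k [0, n_i] = {(a₁,…,a_k) ∈ ℤ^k : 0 ≤ a_i ≤ n_i for all i} is parametrizable by a k-tuple of polynomials with integer coefficients: there exist n and f = (f₁,…,f_k) ∈ (ℤ[x₁,…,x_n])^k with f(ℤ^n) = ℤ^k ∖ ∏_{i=1}^k [0, n_i]. -/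
open MvPolynomial

namespace CuboidAux

lemma four_squares (z : ℤ) (hz : 0 ≤ z) :
    ∃ a b c d : ℤ, a ^ 2 + b ^ 2 + c ^ 2 + d ^ 2 = z := by
  obtain ⟨m, rfl⟩ := Int.eq_ofNat_of_zero_le hz
  obtain ⟨a, b, c, d, h⟩ := Nat.sum_four_squares m
  exact ⟨a, b, c, d, by exact_mod_cast h⟩

lemma one_le_sq {c : ℤ} (hc : c ≠ 0) : 1 ≤ c ^ 2 := by
  have h := Int.one_le_abs hc
  nlinarith [sq_abs c, abs_nonneg c]

lemma sq_add_self_nonneg (Y : ℤ) : 0 ≤ Y ^ 2 + Y := by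
  rcases le_or_gt 0 Y with h | h
  · positivity
  · have h1 : Y + 1 ≤ 0 := by omega
    nlinarith

lemma self_le_sq (Y : ℤ) : Y ≤ Y ^ 2 := by
  rcases le_or_gt Y 0 with h | h
  · nlinarith
  · nlinarith

lemma arith_base {t W Nl : ℤ} (hW : 0 ≤ W) (hNl : 0 ≤ Nl) :
    t * (Nl + 2 + 2 * W) - 1 - W < 0 ∨ Nl < t * (Nl + 2 + 2 * W) - 1 - W := by
  rcases le_or_gt t 0 with h | h
  · left
    have : t * (Nl + 2 + 2 * W) ≤ 0 := mul_nonpos_of_nonpos_of_nonneg h (by linarith)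
    linarith
  · right
    have h1 : 1 ≤ t := h
    nlinarith

lemma arith_neg {Y C1 Pw : ℤ} (hC1 : C1 ≠ 0) (hPw : 0 ≤ Pw) :
    Y - C1 ^ 2 * (Pw + Y ^ 2 + Y + 1) < 0 := by
  have h1 : 1 ≤ C1 ^ 2 := one_le_sq hC1
  have h2 : 0 ≤ Pw + Y ^ 2 + Y + 1 := by nlinarith [sq_add_self_nonneg Y]
  have h3 : Pw + Y ^ 2 + Y + 1 ≤ C1 ^ 2 * (Pw + Y ^ 2 + Y + 1) := le_mul_of_one_le_left h2 h1
  nlinarith [sq_nonneg Y, sq_add_self_nonneg Y]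

lemma arith_pos {Y C1 C2 Pw Qw Nl : ℤ} (hC2 : C2 ≠ 0) (hPw : 0 ≤ Pw) (hQw : 0 ≤ Qw)
    (hNl : 0 ≤ Nl) :
    Nl < (Y - C1 ^ 2 * (Pw + Y ^ 2 + Y + 1)) +
      C2 ^ 2 * (Nl + 1 - (Y - C1 ^ 2 * (Pw + Y ^ 2 + Y + 1)) + Y ^ 2 + Qw) := by
  set G := Y - C1 ^ 2 * (Pw + Y ^ 2 + Y + 1) with hGdef
  have hS : 0 ≤ Pw + Y ^ 2 + Y + 1 := by nlinarith [sq_add_self_nonneg Y]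
  have hGle : G ≤ Y := by
    have := mul_nonneg (sq_nonneg C1) hS
    simp only [hGdef]; linarith
  set δ := Nl + 1 - G + Y ^ 2 + Qw with hδdef
  have hδ : 0 ≤ δ := by
    have := self_le_sq Y
    simp only [hδdef]; linarith
  have hC2sq : 1 ≤ C2 ^ 2 := one_le_sq hC2
  have : δ ≤ C2 ^ 2 * δ := le_mul_of_one_le_left hδ hC2sq
  have hfin : Nl + 1 ≤ G + C2 ^ 2 * δ := by
    have : G + δ = Nl + 1 + Y ^ 2 + Qw := by simp only [hδdef]; ring
    nlinarith [sq_nonneg Y]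
  linarith

/-- Transfer a parametrization over an arbitrary finite variable type to `Fin m`. -/
lemma toFin {k : ℕ} {V : Type} [Fintype V] (f : Fin k → MvPolynomial V ℤ) :
    ∃ (m : ℕ) (f' : Fin k → MvPolynomial (Fin m) ℤ),
      {v : Fin k → ℤ | ∃ a : Fin m → ℤ, ∀ i, MvPolynomial.eval a (f' i) = v i} =
      {v : Fin k → ℤ | ∃ b : V → ℤ, ∀ i, MvPolynomial.eval b (f i) = v i} := by
  classical
  refine ⟨Fintype.card V, fun i => rename (Fintype.equivFin V) (f i), ?_⟩
  ext v
  simp only [Set.mem_setOf_eq, eval_rename]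
  constructor
  · rintro ⟨a, ha⟩
    exact ⟨a ∘ (Fintype.equivFin V), ha⟩
  · rintro ⟨b, hb⟩
    refine ⟨b ∘ (Fintype.equivFin V).symm, fun i => ?_⟩
    have hcomp : (b ∘ (Fintype.equivFin V).symm) ∘ (Fintype.equivFin V) = b := by
      funext s; simp
    rw [hcomp]; exact hb i

end CuboidAux

namespace CuboidAux

abbrev SV (n k : ℕ) : Type :=
  (Fin n ⊕ (Fin k ⊕ Fin k)) ⊕
    (((Unit ⊕ Unit ⊕ Unit ⊕ Unit) ⊕ (Unit ⊕ Unit ⊕ Unit ⊕ Unit)) ⊕ (Unit ⊕ Unit ⊕ Unit))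

variable (n k : ℕ)

def vy : SV n k := Sum.inr (Sum.inr (Sum.inl ()))
def vc1 : SV n k := Sum.inr (Sum.inr (Sum.inr (Sum.inl ())))
def vc2 : SV n k := Sum.inr (Sum.inr (Sum.inr (Sum.inr ())))
def pv0 : SV n k := Sum.inr (Sum.inl (Sum.inl (Sum.inl ())))
def pv1 : SV n k := Sum.inr (Sum.inl (Sum.inl (Sum.inr (Sum.inl ()))))
def pv2 : SV n k := Sum.inr (Sum.inl (Sum.inl (Sum.inr (Sum.inr (Sum.inl ())))))
def pv3 : SV n k := Sum.inr (Sum.inl (Sum.inl (Sum.inr (Sum.inr (Sum.inr ())))))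
def qv0 : SV n k := Sum.inr (Sum.inl (Sum.inr (Sum.inl ())))
def qv1 : SV n k := Sum.inr (Sum.inl (Sum.inr (Sum.inr (Sum.inl ()))))
def qv2 : SV n k := Sum.inr (Sum.inl (Sum.inr (Sum.inr (Sum.inr (Sum.inl ())))))
def qv3 : SV n k := Sum.inr (Sum.inl (Sum.inr (Sum.inr (Sum.inr (Sum.inr ())))))

open MvPolynomial in
noncomputable def Pq : MvPolynomial (SV n k) ℤ :=
  X (pv0 n k) ^ 2 + X (pv1 n k) ^ 2 + X (pv2 n k) ^ 2 + X (pv3 n k) ^ 2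

open MvPolynomial in
noncomputable def Qq : MvPolynomial (SV n k) ℤ :=
  X (qv0 n k) ^ 2 + X (qv1 n k) ^ 2 + X (qv2 n k) ^ 2 + X (qv3 n k) ^ 2

open MvPolynomial in
noncomputable def Gp : MvPolynomial (SV n k) ℤ :=
  X (vy n k) - X (vc1 n k) ^ 2 * (Pq n k + X (vy n k) ^ 2 + X (vy n k) + 1)

open MvPolynomial in
noncomputable def stepF (Nl : ℤ) (g : Fin k → MvPolynomial (Fin n) ℤ) :
    Fin (k + 1) → MvPolynomial (SV n k) ℤ :=
  Fin.lastCases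
    (Gp n k + X (vc2 n k) ^ 2 * (C (Nl + 1) - Gp n k + X (vy n k) ^ 2 + Qq n k))
    (fun j => rename (fun i => Sum.inl (Sum.inl i)) (g j)
      + X (vc1 n k) * X (Sum.inl (Sum.inr (Sum.inl j)))
      + X (vc2 n k) * X (Sum.inl (Sum.inr (Sum.inr j))))

def Pval (b : SV n k → ℤ) : ℤ :=
  b (pv0 n k) ^ 2 + b (pv1 n k) ^ 2 + b (pv2 n k) ^ 2 + b (pv3 n k) ^ 2

def Qval (b : SV n k → ℤ) : ℤ :=
  b (qv0 n k) ^ 2 + b (qv1 n k) ^ 2 + b (qv2 n k) ^ 2 + b (qv3 n k) ^ 2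

lemma eval_stepF_last (Nl : ℤ) (g : Fin k → MvPolynomial (Fin n) ℤ) (b : SV n k → ℤ) :
    MvPolynomial.eval b (stepF n k Nl g (Fin.last k)) =
      (b (vy n k) - b (vc1 n k) ^ 2 * (Pval n k b + b (vy n k) ^ 2 + b (vy n k) + 1)) +
        b (vc2 n k) ^ 2 *
          (Nl + 1 - (b (vy n k) - b (vc1 n k) ^ 2 *
            (Pval n k b + b (vy n k) ^ 2 + b (vy n k) + 1)) + b (vy n k) ^ 2 + Qval n k b) := by
  simp only [stepF, Fin.lastCases_last, Gp, Pq, Qq, Pval, Qval, map_add, map_sub, map_mul,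
    map_pow, map_one, MvPolynomial.eval_X, MvPolynomial.eval_C]

lemma eval_stepF_castSucc (Nl : ℤ) (g : Fin k → MvPolynomial (Fin n) ℤ) (b : SV n k → ℤ)
    (j : Fin k) :
    MvPolynomial.eval b (stepF n k Nl g j.castSucc) =
      MvPolynomial.eval (fun i => b (Sum.inl (Sum.inl i))) (g j)
        + b (vc1 n k) * b (Sum.inl (Sum.inr (Sum.inl j)))
        + b (vc2 n k) * b (Sum.inl (Sum.inr (Sum.inr j))) := by
  simp only [stepF, Fin.lastCases_castSucc, map_add, map_mul, MvPolynomial.eval_X,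
    MvPolynomial.eval_rename]
  rfl

end CuboidAux
/-- The complement in `ℤ^k` (`k ≥ 1`) of a cuboid `∏_{i=1}^k [0, n_i]` is
parametrizable by a `k`-tuple of polynomials with integer coefficients. -/
theorem complement_of_cuboid_int_poly_param (k : ℕ) (hk : 1 ≤ k) (N : Fin k → ℕ) :
    ∃ (n : ℕ) (f : Fin k → MvPolynomial (Fin n) ℤ),
      {v : Fin k → ℤ | ∃ a : Fin n → ℤ, ∀ i, MvPolynomial.eval a (f i) = v i} =
        {v : Fin k → ℤ | ¬ ∀ i, 0 ≤ v i ∧ v i ≤ (N i : ℤ)} := by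
  induction k, hk using Nat.le_induction with
  | base =>
    -- k = 1 : use t * (N+2+2W) - 1 - W with W a sum of four squares
    set Nl : ℤ := (N 0 : ℤ) with hNldef
    have hNl : 0 ≤ Nl := Int.ofNat_nonneg _
    let V : Type := Unit ⊕ (Unit ⊕ Unit ⊕ Unit ⊕ Unit)
    let Psq : MvPolynomial V ℤ :=
      X (.inr (.inl ())) ^ 2 + X (.inr (.inr (.inl ()))) ^ 2 +
      X (.inr (.inr (.inr (.inl ())))) ^ 2 + X (.inr (.inr (.inr (.inr ())))) ^ 2
    let F : MvPolynomial V ℤ := X (.inl ()) * (C (Nl + 2) + 2 * Psq) - 1 - Psq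
    obtain ⟨m, f', hf'⟩ := CuboidAux.toFin (fun _ : Fin 1 => F)
    refine ⟨m, f', ?_⟩
    rw [hf']
    ext v
    simp only [Set.mem_setOf_eq]
    constructor
    · rintro ⟨b, hb⟩
      have h0 := hb 0
      simp only [F, Psq, map_sub, map_add, map_mul, map_pow, map_one, eval_X, eval_C,
        map_ofNat] at h0
      intro hall
      obtain ⟨h1, h2⟩ := hall 0
      set W : ℤ := b (.inr (.inl ())) ^ 2 + b (.inr (.inr (.inl ()))) ^ 2 +
        b (.inr (.inr (.inr (.inl ())))) ^ 2 + b (.inr (.inr (.inr (.inr ())))) ^ 2 with hW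
      have hWnn : 0 ≤ W := by positivity
      have harith := CuboidAux.arith_base (t := b (.inl ())) hWnn hNl
      have hveq : b (.inl ()) * (Nl + 2 + 2 * W) - 1 - W = v 0 := by linear_combination h0
      rcases harith with h | h <;> rw [hveq] at h <;> omega
    · intro hv
      push_neg at hv
      obtain ⟨i, hi⟩ := hv
      have hi0 : i = 0 := Subsingleton.elim _ _
      subst hi0
      have hout : v 0 < 0 ∨ Nl < v 0 := by
        by_contra hc
        push_neg at hc
        exact absurd (hi hc.1) (by omega)
      rcases hout with h | h
      · obtain ⟨a, b', c, d, habcd⟩ := CuboidAux.four_squares (-1 - v 0) (by omega)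
        refine ⟨Sum.elim (fun _ => 0) (Sum.elim (fun _ => a)
          (Sum.elim (fun _ => b') (Sum.elim (fun _ => c) (fun _ => d)))), fun i => ?_⟩
        have hi0 : i = 0 := Subsingleton.elim _ _
        subst hi0
        simp only [F, Psq, map_sub, map_add, map_mul, map_pow, map_one, eval_X, eval_C,
          map_ofNat, Sum.elim_inl, Sum.elim_inr]
        linarith [habcd]
      · obtain ⟨a, b', c, d, habcd⟩ := CuboidAux.four_squares (v 0 - Nl - 1) (by omega)
        refine ⟨Sum.elim (fun _ => 1) (Sum.elim (fun _ => a)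
          (Sum.elim (fun _ => b') (Sum.elim (fun _ => c) (fun _ => d)))), fun i => ?_⟩
        have hi0 : i = 0 := Subsingleton.elim _ _
        subst hi0
        simp only [F, Psq, map_sub, map_add, map_mul, map_pow, map_one, eval_X, eval_C,
          map_ofNat, Sum.elim_inl, Sum.elim_inr]
        linarith [habcd]
  | succ k hk IH =>
    obtain ⟨n, g, hg⟩ := IH (fun j => N j.castSucc)
    set Nl : ℤ := (N (Fin.last k) : ℤ) with hNldef
    have hNl : 0 ≤ Nl := Int.ofNat_nonneg _
    obtain ⟨m, f', hf'⟩ := CuboidAux.toFin (CuboidAux.stepF n k Nl g)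
    refine ⟨m, f', ?_⟩
    rw [hf']
    ext v
    simp only [Set.mem_setOf_eq]
    constructor
    · rintro ⟨b, hb⟩
      intro hall
      have hlast := hb (Fin.last k)
      rw [CuboidAux.eval_stepF_last] at hlast
      set Y := b (CuboidAux.vy n k) with hYd
      set C1 := b (CuboidAux.vc1 n k) with hC1d
      set C2 := b (CuboidAux.vc2 n k) with hC2d
      set Pw := CuboidAux.Pval n k b with hPwd
      set Qw := CuboidAux.Qval n k b with hQwd
      have hPw : 0 ≤ Pw := by rw [hPwd]; unfold CuboidAux.Pval; positivity
      have hQw : 0 ≤ Qw := by rw [hQwd]; unfold CuboidAux.Qval; positivity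
      obtain ⟨hL1, hL2⟩ := hall (Fin.last k)
      by_cases hC2z : C2 = 0
      · by_cases hC1z : C1 = 0
        · -- first k coordinates land in the complement of the smaller cuboid
          have hx : ∀ j : Fin k, MvPolynomial.eval (fun i => b (Sum.inl (Sum.inl i))) (g j)
              = v j.castSucc := by
            intro j
            have h := hb j.castSucc
            rw [CuboidAux.eval_stepF_castSucc] at h
            rw [← hC1d, ← hC2d, hC1z, hC2z] at h
            linarith [h]
          have hmem : (fun j : Fin k => v j.castSucc) ∈
              {w : Fin k → ℤ | ∃ a : Fin n → ℤ, ∀ j, MvPolynomial.eval a (g j) = w j} :=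
            ⟨_, hx⟩
          rw [hg] at hmem
          exact hmem fun j => hall j.castSucc
        · -- c₁ ≠ 0, c₂ = 0 : last coordinate is negative
          have hveq : Y - C1 ^ 2 * (Pw + Y ^ 2 + Y + 1) = v (Fin.last k) := by
            rw [hC2z] at hlast; linear_combination hlast
          have := CuboidAux.arith_neg hC1z hPw (Y := Y)
          rw [hveq] at this
          omega
      · -- c₂ ≠ 0 : last coordinate exceeds Nl
        have := CuboidAux.arith_pos (Y := Y) (C1 := C1) hC2z hPw hQw hNl
        rw [hlast] at this
        omega
    · intro hv
      push_neg at hv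
      obtain ⟨i, hi⟩ := hv
      rcases Fin.eq_castSucc_or_eq_last i with ⟨j, rfl⟩ | rfl
      · -- a non-last coordinate is out of range
        have hmem : (fun j : Fin k => v j.castSucc) ∈
            {w : Fin k → ℤ | ¬ ∀ j, 0 ≤ w j ∧ w j ≤ ((fun j : Fin k => N j.castSucc) j : ℤ)} := by
          intro hall
          obtain ⟨h1, h2⟩ := hall j
          exact absurd (hi h1) (not_lt.2 h2)
        rw [← hg] at hmem
        obtain ⟨x, hx⟩ := hmem
        refine ⟨Sum.elim (Sum.elim x (Sum.elim (fun _ => 0) (fun _ => 0)))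
          (Sum.elim (Sum.elim (fun _ => 0) (fun _ => 0))
            (Sum.elim (fun _ => v (Fin.last k)) (Sum.elim (fun _ => 0) (fun _ => 0)))), ?_⟩
        intro i
        induction i using Fin.lastCases with
        | last =>
          rw [CuboidAux.eval_stepF_last]
          simp only [CuboidAux.vy, CuboidAux.vc1, CuboidAux.vc2, CuboidAux.Pval, CuboidAux.Qval,
            CuboidAux.pv0, CuboidAux.pv1, CuboidAux.pv2, CuboidAux.pv3,
            CuboidAux.qv0, CuboidAux.qv1, CuboidAux.qv2, CuboidAux.qv3,
            Sum.elim_inl, Sum.elim_inr]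
          ring
        | cast j' =>
          rw [CuboidAux.eval_stepF_castSucc]
          simp only [CuboidAux.vc1, CuboidAux.vc2, Sum.elim_inl, Sum.elim_inr]
          simpa using hx j'
      · -- the last coordinate is out of range
        have hout : v (Fin.last k) < 0 ∨ Nl < v (Fin.last k) := by
          by_contra hc
          push_neg at hc
          exact absurd (hi hc.1) (by omega)
        have hx0 : ∃ x : Fin n → ℤ, True := ⟨fun _ => 0, trivial⟩
        rcases hout with h | h
        · -- below 0 : use c₁ = 1
          obtain ⟨a, b2, c, d, habcd⟩ := CuboidAux.four_squares (-1 - v (Fin.last k)) (by omega)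
          refine ⟨Sum.elim (Sum.elim (fun _ => 0)
              (Sum.elim (fun j => v j.castSucc - MvPolynomial.eval (fun _ => (0:ℤ)) (g j))
                (fun _ => 0)))
            (Sum.elim (Sum.elim
                (Sum.elim (fun _ => a) (Sum.elim (fun _ => b2) (Sum.elim (fun _ => c) (fun _ => d))))
                (fun _ => 0))
              (Sum.elim (fun _ => 0) (Sum.elim (fun _ => 1) (fun _ => 0)))), ?_⟩
          intro i
          induction i using Fin.lastCases with
          | last =>
            rw [CuboidAux.eval_stepF_last]
            simp only [CuboidAux.vy, CuboidAux.vc1, CuboidAux.vc2, CuboidAux.Pval, CuboidAux.Qval,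
              CuboidAux.pv0, CuboidAux.pv1, CuboidAux.pv2, CuboidAux.pv3,
              CuboidAux.qv0, CuboidAux.qv1, CuboidAux.qv2, CuboidAux.qv3,
              Sum.elim_inl, Sum.elim_inr]
            linear_combination -habcd
          | cast j' =>
            rw [CuboidAux.eval_stepF_castSucc]
            simp only [CuboidAux.vc1, CuboidAux.vc2, Sum.elim_inl, Sum.elim_inr]
            ring_nf
        · -- above Nl : use c₂ = 1
          obtain ⟨a, b2, c, d, habcd⟩ := CuboidAux.four_squares (v (Fin.last k) - Nl - 1) (by omega)
          refine ⟨Sum.elim (Sum.elim (fun _ => 0)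
              (Sum.elim (fun _ => 0)
                (fun j => v j.castSucc - MvPolynomial.eval (fun _ => (0:ℤ)) (g j))))
            (Sum.elim (Sum.elim (fun _ => 0)
                (Sum.elim (fun _ => a) (Sum.elim (fun _ => b2) (Sum.elim (fun _ => c) (fun _ => d)))))
              (Sum.elim (fun _ => 0) (Sum.elim (fun _ => 0) (fun _ => 1)))), ?_⟩
          intro i
          induction i using Fin.lastCases with
          | last =>
            rw [CuboidAux.eval_stepF_last]
            simp only [CuboidAux.vy, CuboidAux.vc1, CuboidAux.vc2, CuboidAux.Pval, CuboidAux.Qval,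
              CuboidAux.pv0, CuboidAux.pv1, CuboidAux.pv2, CuboidAux.pv3,
              CuboidAux.qv0, CuboidAux.qv1, CuboidAux.qv2, CuboidAux.qv3,
              Sum.elim_inl, Sum.elim_inr]
            linear_combination habcd
          | cast j' =>
            rw [CuboidAux.eval_stepF_castSucc]
            simp only [CuboidAux.vc1, CuboidAux.vc2, Sum.elim_inl, Sum.elim_inr]
            ring_nf
end

section
/- Let n₁,…,n_k be non-negative integers and let g = (g₁,…,g_k) be a k-tuple of polynomials with integer coefficients in variables x₁,…,x_n whose image g(ℤ^n) contains ℤ^k ∖ ∏_{i=1}^k [0, n_i] but does not contain the point 0 ∈ ℤ^k. Let c ∈ ∏_{i=1}^k [0, n_i] and let t be a positive integer with 2^{2t−2} > max_i n_i. Define the k-tuple h in the variables x₁,…,x_n and a new variable w by h = w^{2t}·g + (1 − w²)·c, i.e., h_i = w^{2t} g_i + (1 − w²) c_i for each i. Then the image of h on ℤ^{n+1} is exactly g(ℤ^n) ∪ {c}. -/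
/-- Adding one value to the range: if the image of the `k`-tuple `g` of integer
polynomials contains `ℤ^k ∖ ∏ᵢ [0, nᵢ]` but not `0`, `c` lies in the cuboid
`∏ᵢ [0, nᵢ]`, and `t ≥ 1` satisfies `2^(2t−2) > maxᵢ nᵢ`, then the `k`-tuple
`h = w^{2t}·g + (1 − w²)·c` (in one extra variable `w`) has image exactly
`g(ℤ^n) ∪ {c}`. -/
theorem add_one_value_to_range (k n : ℕ) (N : Fin k → ℕ)
    (g : Fin k → MvPolynomial (Fin n) ℤ) (c : Fin k → ℤ) (t : ℕ)
    (hsub : {v : Fin k → ℤ | ¬ ∀ i, 0 ≤ v i ∧ v i ≤ (N i : ℤ)} ⊆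
      {v : Fin k → ℤ | ∃ a : Fin n → ℤ, ∀ i, MvPolynomial.eval a (g i) = v i})
    (h0 : (0 : Fin k → ℤ) ∉
      {v : Fin k → ℤ | ∃ a : Fin n → ℤ, ∀ i, MvPolynomial.eval a (g i) = v i})
    (hc : ∀ i, 0 ≤ c i ∧ c i ≤ (N i : ℤ))
    (ht : 0 < t) (ht2 : ∀ i, (N i : ℤ) < 2 ^ (2 * t - 2)) :
    {v : Fin k → ℤ | ∃ (a : Fin n → ℤ) (w : ℤ),
      ∀ i, v i = w ^ (2 * t) * MvPolynomial.eval a (g i) + (1 - w ^ 2) * c i} =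
    {v : Fin k → ℤ | ∃ a : Fin n → ℤ, ∀ i, MvPolynomial.eval a (g i) = v i} ∪ {c} := by
  ext v
  simp only [Set.mem_setOf_eq, Set.mem_union, Set.mem_singleton_iff]
  constructor
  · rintro ⟨a, w, hv⟩
    by_cases hw0 : w = 0
    · right
      funext i
      rw [hv i, hw0, zero_pow (by omega : 2 * t ≠ 0)]
      ring
    · by_cases hw1 : w ^ 2 = 1
      · left
        refine ⟨a, fun i => ?_⟩
        have hwt : w ^ (2 * t) = 1 := by rw [pow_mul, hw1, one_pow]
        rw [hv i, hwt, hw1]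
        ring
      · -- |w| ≥ 2
        have hwne1 : w ≠ 1 := fun h => hw1 (by simp [h])
        have hwnem1 : w ≠ -1 := fun h => hw1 (by simp [h])
        have hw2 : 2 ≤ w ∨ w ≤ -2 := by omega
        have hw4 : (4 : ℤ) ≤ w ^ 2 := by rcases hw2 with h | h <;> nlinarith
        left
        apply hsub
        simp only [Set.mem_setOf_eq]
        intro hall
        obtain ⟨i, hui⟩ : ∃ i, MvPolynomial.eval a (g i) ≠ 0 := by
          by_contra h
          push_neg at h
          exact h0 ⟨a, h⟩
        obtain ⟨hvi0, hviN⟩ := hall i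
        set u := MvPolynomial.eval a (g i) with hu
        have hpow : w ^ (2 * t) = (w ^ 2) ^ t := by rw [← pow_mul]
        have hsplit : (w ^ 2) ^ t = w ^ 2 * (w ^ 2) ^ (t - 1) := by
          rw [← pow_succ']
          congr 1
          omega
        have hbig : (N i : ℤ) < (w ^ 2) ^ (t - 1) := by
          refine lt_of_lt_of_le (ht2 i) ?_
          calc (2:ℤ) ^ (2 * t - 2) = (2 ^ 2) ^ (t - 1) := by
                rw [← pow_mul]; congr 1; omega
            _ ≤ (w ^ 2) ^ (t - 1) := pow_le_pow_left₀ (by norm_num) (by linarith) _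
        have hposp : (0:ℤ) < (w ^ 2) ^ (t - 1) := by positivity
        have hci := hc i
        rcases lt_or_gt_of_ne hui with hneg | hpos
    -- u ≤ -1 : v i < 0
        · have hu1 : u ≤ -1 := by omega
          nlinarith [hv i, mul_pos (show (0:ℤ) < w^2 by linarith) hposp]
    -- u ≥ 1 : v i > N i
        · have hu1 : 1 ≤ u := by omega
          have hvi : v i = w ^ 2 * (w ^ 2) ^ (t - 1) * u + (1 - w ^ 2) * c i := by
            rw [hu, ← hsplit, ← hpow]; exact hv i
          nlinarith [mul_le_mul_of_nonneg_left hbig.le (show (0:ℤ) ≤ w^2 by linarith),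
            mul_nonneg (mul_pos (show (0:ℤ) < w^2 by linarith) hposp).le (by linarith : (0:ℤ) ≤ u - 1),
            mul_nonneg (by linarith : (0:ℤ) ≤ w^2 - 1) (by linarith [hci.2] : (0:ℤ) ≤ (N i : ℤ) - c i)]
  · rintro (⟨a, ha⟩ | rfl)
    · refine ⟨a, 1, fun i => ?_⟩
      simp [← ha i]
    · exact ⟨fun _ => 0, 0, fun i => by
        simp [zero_pow (by omega : 2 * t ≠ 0)]⟩
end
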